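/- arXiv:1711.02297 — 3 statements merged into one kernel-verified Lean document; each statement's English description precedes it below -/
import Mathlib

section
/- Let Γ = ⟨R_{-1}, R_0, ..., R_n⟩ be a generalized string C-group with n ≥ 1. Then the poset K(Γ) whose i-faces (for -1 ≤ i ≤ n) are the right cosets of Γ_i = ⟨R_k : k ≠ i⟩, with Γ_i φ ≤ Γ_j ψ iff i ≤ j and φψ^{-1} ∈ Γ_{i+1}^+ Γ_{j-1}^-, is a regular incidence complex of rank n on which Γ acts flag-transitively by right multiplication. -/
open Set Pointwise

/-- `Φ` is a flag of the subset `s` of the poset `α`: a chain contained in `s`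
that is maximal among chains contained in `s`. -/
def IsFlagOf {α : Type*} [PartialOrder α] (s Φ : Set α) : Prop :=
  Φ ⊆ s ∧ IsChain (· ≤ ·) Φ ∧
    ∀ Ψ : Set α, Ψ ⊆ s → IsChain (· ≤ ·) Ψ → Φ ⊆ Ψ → Ψ = Φ

/-- Two flags are adjacent if each differs from the other in exactly one face. -/
def FlagAdj {α : Type*} [PartialOrder α] (Φ Ψ : Set α) : Prop :=
  (Φ \ Ψ).ncard = 1 ∧ (Ψ \ Φ).ncard = 1

/-- The set `s` is flag-connected: any two flags of `s` are joined by a sequence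
of successively adjacent flags of `s`. -/
def FlagConnIn {α : Type*} [PartialOrder α] (s : Set α) : Prop :=
  ∀ Φ Ψ : Set α, IsFlagOf s Φ → IsFlagOf s Ψ →
    Relation.ReflTransGen
      (fun A B => IsFlagOf s A ∧ IsFlagOf s B ∧ FlagAdj A B) Φ Ψ

/-- The section between `F` and `G` is connected: any two of its proper faces are
joined by a finite sequence of successively incident proper faces of the section. -/
def ConnIn {α : Type*} [PartialOrder α] (F G : α) : Prop :=
  ∀ H K : α, F < H → H < G → F < K → K < G →
    Relation.ReflTransGen
      (fun a b => F < a ∧ a < G ∧ F < b ∧ b < G ∧ (a ≤ b ∨ b ≤ a)) H K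

/-- An incidence complex of rank `n`: a bounded ranked poset (rank function `rk`
with range `{-1,…,n}`, strictly monotone, all flags having `n+2` elements hitting
every rank), strongly connected (I3), and with at least two `i`-faces between any
incident pair of faces of ranks `i-1` and `i+1` (I4). -/
structure IncComplex (α : Type*) [PartialOrder α] [BoundedOrder α]
    (n : ℤ) (rk : α → ℤ) : Prop where
  rk_bot : rk (⊥ : α) = -1
  rk_top : rk (⊤ : α) = n
  rk_strictMono : ∀ a b : α, a < b → rk a < rk b
  chain_flag : ∀ c : Set α, IsChain (· ≤ ·) c →
    ∃ Φ : Set α, c ⊆ Φ ∧ IsFlagOf Set.univ Φ ∧ Φ.ncard = (n + 2).toNat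
  flag_rk : ∀ Φ : Set α, IsFlagOf Set.univ Φ →
    ∀ i ∈ Set.Icc (-1 : ℤ) n, ∃ a ∈ Φ, rk a = i
  strong_conn : ∀ F G : α, F ≤ G → 2 ≤ rk G - rk F - 1 → ConnIn F G
  two_between : ∀ F G : α, F < G → rk G = rk F + 2 →
    ∃ H H' : α, H ≠ H' ∧ F < H ∧ H < G ∧ F < H' ∧ H' < G

/-- A complex is regular if its automorphism group acts transitively on flags. -/
def IsRegularIC (α : Type*) [PartialOrder α] : Prop :=
  ∀ Φ Ψ : Set α, IsFlagOf Set.univ Φ → IsFlagOf Set.univ Ψ →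
    ∃ g : α ≃o α, ⇑g '' Φ = Ψ

/-- `Γ` is a flag-transitive subgroup of the automorphism group. -/
def FlagTrans {α : Type*} [PartialOrder α] (Γ : Subgroup (α ≃o α)) : Prop :=
  ∀ Φ Ψ : Set α, IsFlagOf Set.univ Φ → IsFlagOf Set.univ Ψ →
    ∃ g ∈ Γ, ⇑g '' Φ = Ψ

/-- The distinguished generating subset `R_i`: the stabilizer in `Γ` of
`Φ \ {F_i}`, where `F` enumerates the base flag by rank. -/
def Rset {α : Type*} [PartialOrder α] (Γ : Subgroup (α ≃o α)) (F : ℤ → α)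
    (n i : ℤ) : Set (α ≃o α) :=
  {g | g ∈ Γ ∧ ∀ j ∈ Set.Icc (-1 : ℤ) n, j ≠ i → g (F j) = F j}

/-- The distinguished subgroup `Γ_I = ⟨R_i : i ∈ I⟩` of a group with a system of
generating subgroups `R : ℤ → Subgroup G` (with the convention `Γ_∅ = R_{-1}`,
which is harmless for nonempty `I ⊆ {-1,…,n}` since `R_{-1}` is contained in
every `R_i`). -/
def GamI {G : Type*} [Group G] (R : ℤ → Subgroup G) (I : Set ℤ) : Subgroup G :=
  R (-1) ⊔ ⨆ i ∈ I, R i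

/-- `Γ_k^- = ⟨R_j : j ≤ k⟩`. -/
def Gminus {G : Type*} [Group G] (R : ℤ → Subgroup G) (k : ℤ) : Subgroup G :=
  GamI R (Set.Icc (-1) k)

/-- `Γ_k^+ = ⟨R_j : j ≥ k⟩`. -/
def Gplus {G : Type*} [Group G] (R : ℤ → Subgroup G) (n k : ℤ) : Subgroup G :=
  GamI R (Set.Icc k n)

/-- `Γ_i = ⟨R_j : j ≠ i⟩`. -/
def Gsub {G : Type*} [Group G] (R : ℤ → Subgroup G) (n i : ℤ) : Subgroup G :=
  GamI R (Set.Icc (-1) n \ {i})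

/-- A generalized string C-group of rank `n`: a group generated by subgroups
`R_{-1}, R_0, …, R_n` with `R_{-1} = R_n` a proper subgroup of each `R_i`
(`0 ≤ i ≤ n-1`), satisfying the intersection property and the commutation rules
`R_i R_j = R_j R_i` (as product sets) for non-adjacent indices. -/
structure GenStringC {G : Type*} [Group G] (n : ℤ) (R : ℤ → Subgroup G) : Prop where
  one_le_n : 1 ≤ n
  gen_top : GamI R (Set.Icc (-1) n) = ⊤
  ends_eq : R (-1) = R n
  ends_lt : ∀ i ∈ Set.Icc (0 : ℤ) (n - 1), R (-1) < R i
  inter : ∀ I J : Set ℤ, I ⊆ Set.Icc (-1 : ℤ) n → J ⊆ Set.Icc (-1 : ℤ) n →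
    GamI R I ⊓ GamI R J = GamI R (I ∩ J)
  comm : ∀ i j : ℤ, -1 ≤ i → i < j - 1 → j ≤ n →
    (↑(R i) : Set G) * ↑(R j) = (↑(R j) : Set G) * ↑(R i)

/-- The set of `i`-faces of `K(Γ)`: right cosets of `Γ_i = ⟨R_k : k ≠ i⟩`. -/
def Gface {G : Type*} [Group G] (n : ℤ) (R : ℤ → Subgroup G) (i : ℤ) :=
  Quotient (QuotientGroup.rightRel (Gsub R n i))

/-- The faces of the complex `K(Γ)`: for each rank `i ∈ {-1,…,n}` the right
cosets `Γ_i φ`. -/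
def KF {G : Type*} [Group G] (n : ℤ) (R : ℤ → Subgroup G) :=
  Σ i : ↥(Set.Icc (-1 : ℤ) n), Gface n R i.1

/-- The incidence relation of `K(Γ)`:
`Γ_i φ ≤ Γ_j ψ  iff  i ≤ j and φψ⁻¹ ∈ Γ_{i+1}^+ Γ_{j-1}^-`. -/
def KGle {G : Type*} [Group G] (n : ℤ) (R : ℤ → Subgroup G)
    (x y : KF n R) : Prop :=
  x.1.1 ≤ y.1.1 ∧ ∃ φ ψ : G,
    x.2 = Quotient.mk (QuotientGroup.rightRel (Gsub R n x.1.1)) φ ∧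
    y.2 = Quotient.mk (QuotientGroup.rightRel (Gsub R n y.1.1)) ψ ∧
    φ * ψ⁻¹ ∈ (↑(Gplus R n (x.1.1 + 1)) : Set G) * ↑(Gminus R (y.1.1 - 1))

/-- Right multiplication action of `Γ` on the faces of `K(Γ)`. -/
def rmulKF {G : Type*} [Group G] (n : ℤ) (R : ℤ → Subgroup G) (g : G)
    (x : KF n R) : KF n R :=
  ⟨x.1, Quotient.map (· * g)
    (fun a b h => by
      have h' : b * a⁻¹ ∈ Gsub R n x.1.1 :=
        (QuotientGroup.rightRel_apply).1 h
      refine (QuotientGroup.rightRel_apply).2 ?_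
      simpa [mul_assoc] using h') x.2⟩


namespace GSC
variable {G : Type*} [Group G]

lemma coe_mul_self (H : Subgroup G) : (H : Set G) * (H : Set G) = (H : Set G) := by
  apply subset_antisymm
  · rintro x ⟨a, ha, b, hb, rfl⟩; exact mul_mem ha hb
  · intro x hx; exact ⟨x, hx, 1, one_mem _, mul_one x⟩

lemma subset_mul_left (H K : Subgroup G) : (H : Set G) ⊆ (H : Set G) * K :=
  fun x hx => ⟨x, hx, 1, one_mem _, mul_one x⟩

lemma subset_mul_right (H K : Subgroup G) : (K : Set G) ⊆ (H : Set G) * K :=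
  fun x hx => ⟨1, one_mem _, x, hx, one_mul x⟩

lemma mul_of_le {H K : Subgroup G} (h : H ≤ K) : (H : Set G) * K = K := by
  apply subset_antisymm
  · rintro x ⟨a, ha, b, hb, rfl⟩; exact mul_mem (h ha) hb
  · exact subset_mul_right H K

lemma mul_of_ge {H K : Subgroup G} (h : H ≤ K) : (K : Set G) * H = K := by
  apply subset_antisymm
  · rintro x ⟨a, ha, b, hb, rfl⟩; exact mul_mem ha (h hb)
  · exact subset_mul_left K H

/-- If `A·B ⊆ B·A` (as sets) then `B·A` is the subgroup `A ⊔ B`. -/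
lemma coe_sup_of_swap (A B : Subgroup G) (h : (A : Set G) * B ⊆ (B : Set G) * A) :
    ((A ⊔ B : Subgroup G) : Set G) = (B : Set G) * A := by
  have hsub : ∃ K : Subgroup G, (K : Set G) = (B : Set G) * A := by
    refine ⟨{ carrier := (B : Set G) * A
              one_mem' := ⟨1, one_mem _, 1, one_mem _, one_mul 1⟩
              mul_mem' := ?_
              inv_mem' := ?_ }, rfl⟩
    · rintro x y ⟨b, hb, a, ha, rfl⟩ ⟨b', hb', a', ha', rfl⟩
      have : a * b' ∈ (B : Set G) * A := h ⟨a, ha, b', hb', rfl⟩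
      obtain ⟨b'', hb'', a'', ha'', hba⟩ := this
      refine ⟨b * b'', mul_mem hb hb'', a'' * a', mul_mem ha'' ha', ?_⟩
      have hba' : b'' * a'' = a * b' := hba
      calc b * b'' * (a'' * a') = b * (b'' * a'') * a' := by group
        _ = b * (a * b') * a' := by rw [hba']
        _ = b * a * (b' * a') := by group
    · rintro x ⟨b, hb, a, ha, rfl⟩
      have : a⁻¹ * b⁻¹ ∈ (B : Set G) * A := h ⟨a⁻¹, inv_mem ha, b⁻¹, inv_mem hb, rfl⟩
      simpa [mul_inv_rev] using this
  obtain ⟨K, hK⟩ := hsub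
  have h1 : A ⊔ B = K := by
    apply le_antisymm
    · refine sup_le (fun x hx => ?_) (fun x hx => ?_)
      · have : x ∈ (B : Set G) * A := ⟨1, one_mem _, x, hx, one_mul x⟩
        rw [← hK] at this
        exact this
      · have : x ∈ (B : Set G) * A := ⟨x, hx, 1, one_mem _, mul_one x⟩
        rw [← hK] at this
        exact this
    · intro x hx
      have : x ∈ (B : Set G) * A := by
        rw [← hK]
        exact hx
      obtain ⟨b, hb, a, ha, rfl⟩ := this
      exact mul_mem (le_sup_right (a := A) hb) (le_sup_left (b := B) ha)
  rw [h1, hK]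

lemma mem_closure_submonoid {S : Set G} (hSinv : ∀ s ∈ S, s⁻¹ ∈ S) {x : G}
    (hx : x ∈ Subgroup.closure S) : x ∈ Submonoid.closure S := by
  have hS : S ∪ S⁻¹ = S := by
    apply Set.union_eq_self_of_subset_right
    intro s hs
    rw [Set.mem_inv] at hs
    simpa using hSinv _ hs
  have heq := Subgroup.closure_toSubmonoid S
  have hx' : x ∈ (Subgroup.closure S).toSubmonoid := hx
  rw [heq, hS] at hx'
  exact hx'

lemma subgroup_mul_closure_subset (H : Subgroup G) (S : Set G)
    (hSinv : ∀ s ∈ S, s⁻¹ ∈ S)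
    (h : ∀ s ∈ S, (H : Set G) * {s} ⊆ (Subgroup.closure S : Set G) * H) :
    (H : Set G) * (Subgroup.closure S : Set G) ⊆ (Subgroup.closure S : Set G) * H := by
  have key : ∀ b ∈ Submonoid.closure S, (H : Set G) * {b} ⊆ (Subgroup.closure S : Set G) * H := by
    intro b hb
    induction hb using Submonoid.closure_induction with
    | mem s hs => exact h s hs
    | one =>
      rintro x ⟨a, ha, o, ho, rfl⟩
      rcases ho with rfl
      exact ⟨1, one_mem _, a, ha, by group⟩
    | mul u v hu hv pu pv =>
      rintro x ⟨a, ha, w, hw, rfl⟩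
      rcases hw with rfl
      have h1 : a * u ∈ (Subgroup.closure S : Set G) * H := pu ⟨a, ha, u, rfl, rfl⟩
      obtain ⟨c, hc, a', ha', hcu⟩ := h1
      have hcu' : c * a' = a * u := hcu
      have h2 : a' * v ∈ (Subgroup.closure S : Set G) * H := pv ⟨a', ha', v, rfl, rfl⟩
      obtain ⟨c', hc', a'', ha'', hcv⟩ := h2
      have hcv' : c' * a'' = a' * v := hcv
      refine ⟨c * c', mul_mem hc hc', a'', ha'', ?_⟩
      calc c * c' * a'' = c * (c' * a'') := by group
        _ = c * (a' * v) := by rw [hcv']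
        _ = (c * a') * v := by group
        _ = (a * u) * v := by rw [hcu']
        _ = a * (u * v) := by group
  rintro x ⟨a, ha, b, hb, rfl⟩
  exact key b (mem_closure_submonoid hSinv hb) ⟨a, ha, b, rfl, rfl⟩

lemma closure_mul_subgroup_subset (B : Subgroup G) (T : Set G)
    (hTinv : ∀ t ∈ T, t⁻¹ ∈ T)
    (h : ∀ t ∈ T, {t} * (B : Set G) ⊆ (B : Set G) * (Subgroup.closure T : Set G)) :
    (Subgroup.closure T : Set G) * (B : Set G) ⊆ (B : Set G) * (Subgroup.closure T : Set G) := by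
  have key : ∀ a ∈ Submonoid.closure T,
      {a} * (B : Set G) ⊆ (B : Set G) * (Subgroup.closure T : Set G) := by
    intro a ha
    induction ha using Submonoid.closure_induction with
    | mem t ht => exact h t ht
    | one =>
      rintro x ⟨o, ho, b, hb, rfl⟩
      rcases ho with rfl
      exact ⟨b, hb, 1, one_mem _, by group⟩
    | mul u v hu hv pu pv =>
      rintro x ⟨w, hw, b, hb, rfl⟩
      rcases hw with rfl
      have h2 : v * b ∈ (B : Set G) * (Subgroup.closure T : Set G) := pv ⟨v, rfl, b, hb, rfl⟩
      obtain ⟨b', hb', c, hc, hvb⟩ := h2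
      have hvb' : b' * c = v * b := hvb
      have h1 : u * b' ∈ (B : Set G) * (Subgroup.closure T : Set G) := pu ⟨u, rfl, b', hb', rfl⟩
      obtain ⟨b'', hb'', c', hc', hub⟩ := h1
      have hub' : b'' * c' = u * b' := hub
      refine ⟨b'', hb'', c' * c, mul_mem hc' hc, ?_⟩
      calc b'' * (c' * c) = (b'' * c') * c := by group
        _ = (u * b') * c := by rw [hub']
        _ = u * (b' * c) := by group
        _ = u * (v * b) := by rw [hvb']
        _ = u * v * b := by group
  rintro x ⟨a, ha, b, hb, rfl⟩
  exact key a (mem_closure_submonoid hTinv ha) ⟨a, rfl, b, hb, rfl⟩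

end GSC
namespace GSC
section
variable {G : Type*} [Group G] (n : ℤ) (R : ℤ → Subgroup G)

lemma R_le_GamI {I : Set ℤ} {k : ℤ} (hk : k ∈ I) : R k ≤ GamI R I :=
  le_trans (le_biSup _ hk) le_sup_right

lemma Rneg_le_GamI (I : Set ℤ) : R (-1) ≤ GamI R I := le_sup_left

lemma GamI_mono {I J : Set ℤ} (h : I ⊆ J) : GamI R I ≤ GamI R J :=
  sup_le_sup_left (biSup_mono h) _

lemma GamI_union (I J : Set ℤ) : GamI R (I ∪ J) = GamI R I ⊔ GamI R J := by
  rw [GamI, iSup_union, GamI, GamI, sup_sup_distrib_left]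

lemma GamI_empty : GamI R ∅ = R (-1) := by simp [GamI]

lemma GamI_le {I : Set ℤ} {K : Subgroup G} (hneg : R (-1) ≤ K) (h : ∀ k ∈ I, R k ≤ K) :
    GamI R I ≤ K :=
  sup_le hneg (iSup_le fun k => iSup_le fun hk => h k hk)

lemma GamI_eq_closure (I : Set ℤ) (hne : ∃ k ∈ I, R (-1) ≤ R k) :
    GamI R I = Subgroup.closure (⋃ k ∈ I, (R k : Set G)) := by
  have h1 : Subgroup.closure (⋃ k ∈ I, (R k : Set G)) = ⨆ k ∈ I, R k := by
    rw [Subgroup.closure_iUnion]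
    refine iSup_congr fun k => ?_
    rw [Subgroup.closure_iUnion]
    exact iSup_congr fun hk => Subgroup.closure_eq _
  rw [h1, GamI]
  obtain ⟨k, hk, hle⟩ := hne
  exact sup_eq_right.2 (hle.trans (le_biSup _ hk))

variable {n R}

lemma Rneg_le_R (hC : GenStringC n R) {k : ℤ} (h1 : -1 ≤ k) (h2 : k ≤ n) :
    R (-1) ≤ R k := by
  by_cases hk1 : k = -1
  · rw [hk1]
  · by_cases hkn : k = n
    · rw [hkn]
      exact hC.ends_eq.le
    · exact (hC.ends_lt k ⟨by omega, by omega⟩).le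

lemma pair_comm (hC : GenStringC n R) {p q : ℤ} (hp : -1 ≤ p) (hpn : p ≤ n - 1)
    (hq : q ≤ n) (hpq : p + 2 ≤ q) :
    (R p : Set G) * R q = (R q : Set G) * R p := by
  by_cases hp1 : p = -1
  · subst hp1
    have hle : R (-1) ≤ R q := Rneg_le_R hC (by omega) hq
    rw [mul_of_le hle, mul_of_ge hle]
  · exact hC.comm p q hp (by omega) hq

lemma inv_closed_iUnion {I : Set ℤ} :
    ∀ s ∈ ⋃ k ∈ I, (R k : Set G), s⁻¹ ∈ ⋃ k ∈ I, (R k : Set G) := by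
  intro s hs
  obtain ⟨k, hk, hsk⟩ := Set.mem_iUnion₂.1 hs
  exact Set.mem_iUnion₂.2 ⟨k, hk, inv_mem hsk⟩

lemma gm_gp_comm (hC : GenStringC n R) {a b : ℤ} (han : a ≤ n - 1) (hb : 0 ≤ b)
    (hab : a + 2 ≤ b) :
    (Gminus R a : Set G) * (Gplus R n b : Set G)
      = (Gplus R n b : Set G) * (Gminus R a : Set G) := by
  by_cases ha1 : a < -1
  · have hem : Set.Icc (-1 : ℤ) a = ∅ := Set.Icc_eq_empty (by omega)
    have h0 : Gminus R a = R (-1) := by rw [Gminus, hem, GamI_empty]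
    have hle : R (-1) ≤ Gplus R n b := Rneg_le_GamI R _
    rw [h0, mul_of_le hle, mul_of_ge hle]
  by_cases hbn : n < b
  · have hem : Set.Icc b n = ∅ := Set.Icc_eq_empty (by omega)
    have h0 : Gplus R n b = R (-1) := by rw [Gplus, hem, GamI_empty]
    have hle : R (-1) ≤ Gminus R a := Rneg_le_GamI R _
    rw [h0, mul_of_le hle, mul_of_ge hle]
  push_neg at ha1 hbn
  set S : Set G := ⋃ k ∈ Set.Icc (-1 : ℤ) a, (R k : Set G) with hS
  set T : Set G := ⋃ k ∈ Set.Icc b n, (R k : Set G) with hT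
  have hGm : Gminus R a = Subgroup.closure S :=
    GamI_eq_closure R _ ⟨-1, Set.mem_Icc.2 ⟨le_refl _, ha1⟩, le_refl _⟩
  have hGp : Gplus R n b = Subgroup.closure T :=
    GamI_eq_closure R _ ⟨n, Set.mem_Icc.2 ⟨hbn, le_refl _⟩, hC.ends_eq.le⟩
  have hRS : ∀ p ∈ Set.Icc (-1 : ℤ) a, (R p : Set G) ⊆ S := by
    intro p hp x hx; exact Set.mem_iUnion₂.2 ⟨p, hp, hx⟩
  have hRT : ∀ q ∈ Set.Icc b n, (R q : Set G) ⊆ T := by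
    intro q hq x hx; exact Set.mem_iUnion₂.2 ⟨q, hq, hx⟩
  have stepA : ∀ p ∈ Set.Icc (-1 : ℤ) a,
      (R p : Set G) * (Gplus R n b : Set G) ⊆ (Gplus R n b : Set G) * (R p : Set G) := by
    intro p hp
    rw [hGp]
    apply subgroup_mul_closure_subset _ _ (inv_closed_iUnion)
    intro s hs
    obtain ⟨q, hq, hsq⟩ := Set.mem_iUnion₂.1 hs
    have h1 : (R p : Set G) * {s} ⊆ (R p : Set G) * (R q : Set G) :=
      mul_subset_mul subset_rfl (Set.singleton_subset_iff.2 hsq)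
    rw [pair_comm hC (Set.mem_Icc.1 hp).1 (le_trans (Set.mem_Icc.1 hp).2 han)
      (Set.mem_Icc.1 hq).2 (by have := (Set.mem_Icc.1 hp).2; have := (Set.mem_Icc.1 hq).1; omega)] at h1
    exact h1.trans (mul_subset_mul ((hRT q hq).trans Subgroup.subset_closure) subset_rfl)
  have stepA' : ∀ q ∈ Set.Icc b n,
      (R q : Set G) * (Gminus R a : Set G) ⊆ (Gminus R a : Set G) * (R q : Set G) := by
    intro q hq
    rw [hGm]
    apply subgroup_mul_closure_subset _ _ (inv_closed_iUnion)
    intro s hs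
    obtain ⟨p, hp, hsp⟩ := Set.mem_iUnion₂.1 hs
    have h1 : (R q : Set G) * {s} ⊆ (R q : Set G) * (R p : Set G) :=
      mul_subset_mul subset_rfl (Set.singleton_subset_iff.2 hsp)
    rw [← pair_comm hC (Set.mem_Icc.1 hp).1 (le_trans (Set.mem_Icc.1 hp).2 han)
      (Set.mem_Icc.1 hq).2 (by have := (Set.mem_Icc.1 hp).2; have := (Set.mem_Icc.1 hq).1; omega)] at h1
    exact h1.trans (mul_subset_mul ((hRS p hp).trans Subgroup.subset_closure) subset_rfl)
  have incl1 : (Gminus R a : Set G) * (Gplus R n b : Set G)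
      ⊆ (Gplus R n b : Set G) * (Gminus R a : Set G) := by
    rw [hGm, hGp]
    apply closure_mul_subgroup_subset
    · exact inv_closed_iUnion
    · intro t ht
      obtain ⟨p, hp, htp⟩ := Set.mem_iUnion₂.1 ht
      have h2 := stepA p hp
      rw [hGp] at h2
      have h3 : (R p : Set G) ⊆ (Subgroup.closure S : Set G) := by
        rw [← hGm]; exact SetLike.coe_subset_coe.2 (R_le_GamI R hp)
      exact (mul_subset_mul (Set.singleton_subset_iff.2 htp) subset_rfl).trans
        (h2.trans (mul_subset_mul subset_rfl h3))
  have incl2 : (Gplus R n b : Set G) * (Gminus R a : Set G)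
      ⊆ (Gminus R a : Set G) * (Gplus R n b : Set G) := by
    rw [hGm, hGp]
    apply closure_mul_subgroup_subset
    · exact inv_closed_iUnion
    · intro t ht
      obtain ⟨q, hq, htq⟩ := Set.mem_iUnion₂.1 ht
      have h2 := stepA' q hq
      rw [hGm] at h2
      have h3 : (R q : Set G) ⊆ (Subgroup.closure T : Set G) := by
        rw [← hGp]; exact SetLike.coe_subset_coe.2 (R_le_GamI R hq)
      exact (mul_subset_mul (Set.singleton_subset_iff.2 htq) subset_rfl).trans
        (h2.trans (mul_subset_mul subset_rfl h3))
  exact subset_antisymm incl1 incl2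

lemma gp_sup_gm_coe (hC : GenStringC n R) {a b : ℤ} (han : a ≤ n - 1) (hb : 0 ≤ b)
    (hab : a + 2 ≤ b) :
    ((Gplus R n b ⊔ Gminus R a : Subgroup G) : Set G)
      = (Gplus R n b : Set G) * (Gminus R a : Set G) := by
  rw [sup_comm]
  exact coe_sup_of_swap _ _ (le_of_eq (gm_gp_comm hC han hb hab))

lemma Gsub_eq_sup {i : ℤ} (hi : i ∈ Set.Icc (-1 : ℤ) n) :
    Gsub R n i = Gplus R n (i + 1) ⊔ Gminus R (i - 1) := by
  rw [Set.mem_Icc] at hi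
  have hset : Set.Icc (-1 : ℤ) n \ {i} = Set.Icc (i + 1) n ∪ Set.Icc (-1) (i - 1) := by
    ext x
    simp only [Set.mem_diff, Set.mem_Icc, Set.mem_singleton_iff, Set.mem_union]
    omega
  rw [Gsub, hset, GamI_union, Gplus, Gminus]

lemma coe_Gsub (hC : GenStringC n R) {i : ℤ} (hi : i ∈ Set.Icc (-1 : ℤ) n) :
    (Gsub R n i : Set G) = (Gplus R n (i + 1) : Set G) * (Gminus R (i - 1) : Set G) := by
  rw [Gsub_eq_sup hi]
  exact gp_sup_gm_coe hC (by have := hi.2; omega) (by have := hi.1; omega) (by omega)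

lemma Gplus_anti {b b' : ℤ} (h : b ≤ b') : Gplus R n b' ≤ Gplus R n b :=
  GamI_mono R (Set.Icc_subset_Icc_left h)

lemma Gminus_mono {a a' : ℤ} (h : a ≤ a') : Gminus R a ≤ Gminus R a' :=
  GamI_mono R (Set.Icc_subset_Icc_right h)

lemma Gplus_le_Gsub {b k : ℤ} (hk : -1 ≤ k) (h : k < b) : Gplus R n b ≤ Gsub R n k := by
  apply GamI_mono
  intro x hx
  simp only [Set.mem_Icc] at hx
  simp only [Set.mem_diff, Set.mem_Icc, Set.mem_singleton_iff]
  omega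

lemma Gminus_le_Gsub {a k : ℤ} (hk : k ≤ n) (h : a < k) : Gminus R a ≤ Gsub R n k := by
  apply GamI_mono
  intro x hx
  simp only [Set.mem_Icc] at hx
  simp only [Set.mem_diff, Set.mem_Icc, Set.mem_singleton_iff]
  omega

/-- The fundamental product absorption:
`Γ⁺_{i+1} Γ⁻_{j-1} · Γ⁺_{j+1} Γ⁻_{k-1} ⊆ Γ⁺_{i+1} Γ⁻_{k-1}` for `i ≤ j ≤ k ≤ n`, `-1 ≤ i`. -/
lemma pm_mul_pm (hC : GenStringC n R) {i j k : ℤ} (hi : -1 ≤ i) (hij : i ≤ j)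
    (hjk : j ≤ k) (hk : k ≤ n) :
    ((Gplus R n (i + 1) : Set G) * (Gminus R (j - 1) : Set G)) *
      ((Gplus R n (j + 1) : Set G) * (Gminus R (k - 1) : Set G))
      ⊆ (Gplus R n (i + 1) : Set G) * (Gminus R (k - 1) : Set G) := by
  have hswap : (Gminus R (j - 1) : Set G) * (Gplus R n (j + 1) : Set G)
      = (Gplus R n (j + 1) : Set G) * (Gminus R (j - 1) : Set G) :=
    gm_gp_comm hC (by omega) (by omega) (by omega)
  rintro x ⟨u, ⟨p1, hp1, m1, hm1, rfl⟩, v, ⟨p2, hp2, m2, hm2, rfl⟩, rfl⟩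
  have hmem : m1 * p2 ∈ (Gplus R n (j + 1) : Set G) * (Gminus R (j - 1) : Set G) := by
    rw [← hswap]; exact ⟨m1, hm1, p2, hp2, rfl⟩
  obtain ⟨p2', hp2', m1', hm1', hswapped⟩ := hmem
  refine ⟨p1 * p2', mul_mem hp1 (Gplus_anti (by omega) hp2'), m1' * m2,
    mul_mem (Gminus_mono (by omega) hm1') hm2, ?_⟩
  have hs : p2' * m1' = m1 * p2 := hswapped
  calc p1 * p2' * (m1' * m2) = p1 * (p2' * m1') * m2 := by group
    _ = p1 * (m1 * p2) * m2 := by rw [hs]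
    _ = p1 * m1 * (p2 * m2) := by group

end
end GSC
namespace GSC
section
variable {G : Type*} [Group G] {n : ℤ} {R : ℤ → Subgroup G}

/-- The `i`-face with representative `g`. -/
def face (n : ℤ) (R : ℤ → Subgroup G) (i : ℤ) (hi : i ∈ Set.Icc (-1 : ℤ) n) (g : G) :
    KF n R :=
  ⟨⟨i, hi⟩, Quotient.mk (QuotientGroup.rightRel (Gsub R n i)) g⟩

lemma exists_face_rep (x : KF n R) :
    ∃ (i : ℤ) (hi : i ∈ Set.Icc (-1 : ℤ) n) (g : G), x = face n R i hi g := by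
  obtain ⟨⟨i, hi⟩, c⟩ := x
  obtain ⟨g, hg⟩ := Quotient.exists_rep c
  exact ⟨i, hi, g, by rw [face, ← hg]⟩

lemma face_eq_iff {i : ℤ} (hi hi' : i ∈ Set.Icc (-1 : ℤ) n) (g h : G) :
    face n R i hi g = face n R i hi' h ↔ h * g⁻¹ ∈ Gsub R n i := by
  constructor
  · intro he
    have h2 := Sigma.ext_iff.1 he
    have h3 : Quotient.mk (QuotientGroup.rightRel (Gsub R n i)) g
        = Quotient.mk (QuotientGroup.rightRel (Gsub R n i)) h := eq_of_heq h2.2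
    exact QuotientGroup.rightRel_apply.1 (Quotient.exact h3)
  · intro hm
    have h3 : Quotient.mk (QuotientGroup.rightRel (Gsub R n i)) g
        = Quotient.mk (QuotientGroup.rightRel (Gsub R n i)) h :=
      Quotient.sound (QuotientGroup.rightRel_apply.2 hm)
    rw [face, face, h3]

lemma kgle_iff (hC : GenStringC n R) {i j : ℤ} (hi : i ∈ Set.Icc (-1 : ℤ) n)
    (hj : j ∈ Set.Icc (-1 : ℤ) n) (g h : G) :
    KGle n R (face n R i hi g) (face n R j hj h) ↔
      i ≤ j ∧ g * h⁻¹ ∈ (Gplus R n (i + 1) : Set G) * (Gminus R (j - 1) : Set G) := by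
  rw [Set.mem_Icc] at hi hj
  constructor
  · rintro ⟨hle, φ, ψ, hx, hy, hmem⟩
    refine ⟨hle, ?_⟩
    have h1 : φ * g⁻¹ ∈ Gsub R n i := QuotientGroup.rightRel_apply.1 (Quotient.exact hx)
    have h2 : ψ * h⁻¹ ∈ Gsub R n j := QuotientGroup.rightRel_apply.1 (Quotient.exact hy)
    have hdec : g * h⁻¹ = (φ * g⁻¹)⁻¹ * ((φ * ψ⁻¹) * (ψ * h⁻¹)) := by group
    have hstep1 : (φ * ψ⁻¹) * (ψ * h⁻¹)
        ∈ ((Gplus R n (i + 1) : Set G) * (Gminus R (j - 1) : Set G)) * (Gsub R n j : Set G) :=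
      ⟨_, hmem, _, h2, rfl⟩
    have hstep1' : (φ * ψ⁻¹) * (ψ * h⁻¹)
        ∈ (Gplus R n (i + 1) : Set G) * (Gminus R (j - 1) : Set G) := by
      have hs : ((Gplus R n (i + 1) : Set G) * (Gminus R (j - 1) : Set G)) * (Gsub R n j : Set G)
          ⊆ (Gplus R n (i + 1) : Set G) * (Gminus R (j - 1) : Set G) := by
        rw [coe_Gsub hC (Set.mem_Icc.2 ⟨by omega, hj.2⟩)]
        exact pm_mul_pm hC hi.1 hle le_rfl hj.2
      exact hs hstep1
    have hstep2 : g * h⁻¹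
        ∈ (Gsub R n i : Set G) *
          ((Gplus R n (i + 1) : Set G) * (Gminus R (j - 1) : Set G)) := by
      rw [hdec]
      exact ⟨_, inv_mem h1, _, hstep1', rfl⟩
    have hs2 : (Gsub R n i : Set G) *
        ((Gplus R n (i + 1) : Set G) * (Gminus R (j - 1) : Set G))
        ⊆ (Gplus R n (i + 1) : Set G) * (Gminus R (j - 1) : Set G) := by
      rw [coe_Gsub hC (Set.mem_Icc.2 ⟨hi.1, hi.2⟩)]
      exact pm_mul_pm hC hi.1 le_rfl hle hj.2
    exact hs2 hstep2
  · rintro ⟨hle, hmem⟩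
    exact ⟨hle, g, h, rfl, rfl, hmem⟩

lemma pm_subset_Gsub (hC : GenStringC n R) {i : ℤ} (hi : i ∈ Set.Icc (-1 : ℤ) n) :
    (Gplus R n (i + 1) : Set G) * (Gminus R (i - 1) : Set G) ⊆ (Gsub R n i : Set G) :=
  le_of_eq (coe_Gsub hC hi).symm

lemma kgle_same_rank (hC : GenStringC n R) {i : ℤ} (hi hi' : i ∈ Set.Icc (-1 : ℤ) n)
    {g h : G} (hle : KGle n R (face n R i hi g) (face n R i hi' h)) :
    face n R i hi g = face n R i hi' h := by
  rw [kgle_iff hC hi hi'] at hle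
  have hm : g * h⁻¹ ∈ Gsub R n i := pm_subset_Gsub hC hi hle.2
  exact (face_eq_iff hi hi' g h).2 (by simpa using inv_mem hm)

lemma kgle_refl (x : KF n R) : KGle n R x x := by
  obtain ⟨i, hi, g, rfl⟩ := exists_face_rep x
  refine ⟨le_rfl, g, g, rfl, rfl, ?_⟩
  rw [mul_inv_cancel]
  exact ⟨1, one_mem _, 1, one_mem _, mul_one 1⟩

lemma kgle_trans (hC : GenStringC n R) {x y z : KF n R} (hxy : KGle n R x y)
    (hyz : KGle n R y z) : KGle n R x z := by
  obtain ⟨i, hi, g, rfl⟩ := exists_face_rep x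
  obtain ⟨j, hj, h, rfl⟩ := exists_face_rep y
  obtain ⟨k, hk, l, rfl⟩ := exists_face_rep z
  rw [kgle_iff hC hi hj] at hxy
  rw [kgle_iff hC hj hk] at hyz
  rw [kgle_iff hC hi hk]
  refine ⟨hxy.1.trans hyz.1, ?_⟩
  have : g * l⁻¹ = (g * h⁻¹) * (h * l⁻¹) := by group
  rw [this]
  rw [Set.mem_Icc] at hi hj hk
  exact pm_mul_pm hC hi.1 hxy.1 hyz.1 hk.2 ⟨_, hxy.2, _, hyz.2, rfl⟩

lemma kgle_antisymm (hC : GenStringC n R) {x y : KF n R} (hxy : KGle n R x y)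
    (hyx : KGle n R y x) : x = y := by
  obtain ⟨i, hi, g, rfl⟩ := exists_face_rep x
  obtain ⟨j, hj, h, rfl⟩ := exists_face_rep y
  have hij : i = j := le_antisymm hxy.1 hyx.1
  subst hij
  exact kgle_same_rank hC hi hj hxy

/-- The partial order on `KF n R`. -/
def KPO (hC : GenStringC n R) : PartialOrder (KF n R) where
  le := KGle n R
  le_refl := kgle_refl
  le_trans _ _ _ := kgle_trans hC
  le_antisymm _ _ := kgle_antisymm hC

lemma kpo_le_iff (hC : GenStringC n R) (x y : KF n R) :
    (KPO hC).le x y ↔ KGle n R x y := Iff.rfl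

lemma kpo_lt_iff (hC : GenStringC n R) (x y : KF n R) :
    (KPO hC).lt x y ↔ KGle n R x y ∧ x.1.1 < y.1.1 := by
  letI := KPO hC
  constructor
  · intro hlt
    refine ⟨le_of_lt hlt, ?_⟩
    rcases lt_iff_le_and_ne.1 hlt with ⟨hle, hne⟩
    rcases lt_or_eq_of_le (hle.1 : x.1.1 ≤ y.1.1) with h | h
    · exact h
    · exfalso
      obtain ⟨i, hi, g, rfl⟩ := exists_face_rep x
      obtain ⟨j, hj, hgy, rfl⟩ := exists_face_rep y
      have : i = j := h
      subst this
      exact hne (kgle_same_rank hC hi hj hle)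
  · rintro ⟨hle, hrk⟩
    refine lt_iff_le_and_ne.2 ⟨hle, fun he => ?_⟩
    rw [he] at hrk
    exact lt_irrefl _ hrk

lemma Gplus_zero_top (hC : GenStringC n R) : Gplus R n 0 = ⊤ := by
  rw [← top_le_iff, ← hC.gen_top]
  refine GamI_le R le_sup_left fun k hk => ?_
  rw [Set.mem_Icc] at hk
  by_cases hk1 : k = -1
  · rw [hk1]; exact le_sup_left
  · exact R_le_GamI R (Set.mem_Icc.2 ⟨by omega, hk.2⟩)

lemma Gminus_pred_top (hC : GenStringC n R) : Gminus R (n - 1) = ⊤ := by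
  rw [← top_le_iff, ← hC.gen_top]
  refine GamI_le R le_sup_left fun k hk => ?_
  rw [Set.mem_Icc] at hk
  by_cases hkn : k = n
  · rw [hkn, ← hC.ends_eq]; exact le_sup_left
  · exact R_le_GamI R (Set.mem_Icc.2 ⟨hk.1, by omega⟩)

lemma Gsub_neg_one_top (hC : GenStringC n R) : Gsub R n (-1) = ⊤ := by
  rw [← top_le_iff, ← Gplus_zero_top hC]
  refine GamI_mono R fun x hx => ?_
  rw [Set.mem_Icc] at hx
  simp only [Set.mem_diff, Set.mem_Icc, Set.mem_singleton_iff]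
  omega

lemma Gsub_n_top (hC : GenStringC n R) : Gsub R n n = ⊤ := by
  rw [← top_le_iff, ← Gminus_pred_top hC]
  refine GamI_mono R fun x hx => ?_
  rw [Set.mem_Icc] at hx
  simp only [Set.mem_diff, Set.mem_Icc, Set.mem_singleton_iff]
  omega

lemma neg_one_mem : (-1 : ℤ) ∈ Set.Icc (-1 : ℤ) n ↔ -1 ≤ n := by
  rw [Set.mem_Icc]; omega

lemma face_bot_eq (hC : GenStringC n R) (hb : (-1 : ℤ) ∈ Set.Icc (-1 : ℤ) n)
    (hb' : (-1 : ℤ) ∈ Set.Icc (-1 : ℤ) n) (g h : G) :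
    face n R (-1) hb g = face n R (-1) hb' h := by
  rw [face_eq_iff]
  rw [Gsub_neg_one_top hC]
  trivial

lemma face_top_eq (hC : GenStringC n R) (ht ht' : n ∈ Set.Icc (-1 : ℤ) n) (g h : G) :
    face n R n ht g = face n R n ht' h := by
  rw [face_eq_iff]
  rw [Gsub_n_top hC]
  trivial

lemma hn_mem_bot (hC : GenStringC n R) : (-1 : ℤ) ∈ Set.Icc (-1 : ℤ) n :=
  Set.mem_Icc.2 ⟨le_rfl, by have := hC.one_le_n; omega⟩

lemma hn_mem_top (hC : GenStringC n R) : n ∈ Set.Icc (-1 : ℤ) n :=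
  Set.mem_Icc.2 ⟨by have := hC.one_le_n; omega, le_rfl⟩

lemma kgle_bot (hC : GenStringC n R) (x : KF n R) :
    KGle n R (face n R (-1) (hn_mem_bot hC) 1) x := by
  obtain ⟨j, hj, h, rfl⟩ := exists_face_rep x
  rw [kgle_iff hC _ hj]
  refine ⟨(Set.mem_Icc.1 hj).1, ?_⟩
  have : (-1 : ℤ) + 1 = 0 := by omega
  rw [this, Gplus_zero_top hC]
  exact ⟨1 * h⁻¹, trivial, 1, one_mem _, mul_one _⟩

lemma kgle_top (hC : GenStringC n R) (x : KF n R) :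
    KGle n R x (face n R n (hn_mem_top hC) 1) := by
  obtain ⟨i, hi, g, rfl⟩ := exists_face_rep x
  rw [kgle_iff hC hi]
  refine ⟨(Set.mem_Icc.1 hi).2, ?_⟩
  rw [Gminus_pred_top hC]
  exact ⟨1, one_mem _, g * 1⁻¹, trivial, one_mul _⟩

/-- The bounded order structure. -/
def KBO (hC : GenStringC n R) : @BoundedOrder (KF n R) (KPO hC).toLE :=
  letI := KPO hC
  { top := face n R n (hn_mem_top hC) 1
    bot := face n R (-1) (hn_mem_bot hC) 1
    le_top := kgle_top hC
    bot_le := kgle_bot hC }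

end
end GSC
namespace GSC
section
variable {G : Type*} [Group G] {n : ℤ} {R : ℤ → Subgroup G}

lemma face_le_face_self (hC : GenStringC n R) {i j : ℤ} (hi : i ∈ Set.Icc (-1 : ℤ) n)
    (hj : j ∈ Set.Icc (-1 : ℤ) n) (hij : i ≤ j) (g : G) :
    KGle n R (face n R i hi g) (face n R j hj g) := by
  rw [kgle_iff hC hi hj]
  refine ⟨hij, ?_⟩
  rw [mul_inv_cancel]
  exact ⟨1, one_mem _, 1, one_mem _, mul_one 1⟩

lemma kgle_eq_of_rank_eq (hC : GenStringC n R) {x y : KF n R} (hle : KGle n R x y)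
    (hrk : x.1.1 = y.1.1) : x = y := by
  obtain ⟨i, hi, g, rfl⟩ := exists_face_rep x
  obtain ⟨j, hj, h, rfl⟩ := exists_face_rep y
  have : i = j := hrk
  subst this
  exact kgle_same_rank hC hi hj hle

/-- The flag of all faces with a common representative `g`. -/
def baseFlag (n : ℤ) (R : ℤ → Subgroup G) (g : G) : Set (KF n R) :=
  {x | ∃ (i : ℤ) (hi : i ∈ Set.Icc (-1 : ℤ) n), x = face n R i hi g}

lemma face_mem_baseFlag {i : ℤ} (hi : i ∈ Set.Icc (-1 : ℤ) n) (g : G) :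
    face n R i hi g ∈ baseFlag n R g := ⟨i, hi, rfl⟩

lemma baseFlag_isChain (hC : GenStringC n R) (g : G) :
    IsChain (KGle n R) (baseFlag n R g) := by
  rintro x ⟨i, hi, rfl⟩ y ⟨j, hj, rfl⟩ _
  rcases le_total i j with h | h
  · exact Or.inl (face_le_face_self hC hi hj h g)
  · exact Or.inr (face_le_face_self hC hj hi h g)

lemma baseFlag_isFlag (hC : GenStringC n R) (g : G) :
    @IsFlagOf (KF n R) (KPO hC) Set.univ (baseFlag n R g) := by
  refine ⟨Set.subset_univ _, baseFlag_isChain hC g, ?_⟩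
  intro Ψ _ hchain hsub
  apply subset_antisymm _ hsub
  intro y hy
  obtain ⟨m, hm, h, rfl⟩ := exists_face_rep y
  have hxm : face n R m hm g ∈ Ψ := hsub (face_mem_baseFlag hm g)
  by_cases he : face n R m hm h = face n R m hm g
  · rw [he]; exact face_mem_baseFlag hm g
  · rcases hchain hy hxm he with hle | hle
    · exact absurd (kgle_same_rank hC hm hm hle) he
    · exact absurd (kgle_same_rank hC hm hm hle).symm he

lemma bot_mem_flag (hC : GenStringC n R) {Φ : Set (KF n R)}
    (hΦ : @IsFlagOf (KF n R) (KPO hC) Set.univ Φ) :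
    face n R (-1) (hn_mem_bot hC) 1 ∈ Φ := by
  obtain ⟨-, hchain, hmax⟩ := hΦ
  have hch : IsChain (KGle n R) (insert (face n R (-1) (hn_mem_bot hC) 1) Φ) := by
    rintro x (rfl | hx) y (rfl | hy) hne
    · exact absurd rfl hne
    · exact Or.inl (kgle_bot hC y)
    · exact Or.inr (kgle_bot hC x)
    · exact hchain hx hy hne
  have := hmax _ (Set.subset_univ _) hch (Set.subset_insert _ _)
  rw [← this]
  exact Set.mem_insert _ _

lemma top_mem_flag (hC : GenStringC n R) {Φ : Set (KF n R)}
    (hΦ : @IsFlagOf (KF n R) (KPO hC) Set.univ Φ) :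
    face n R n (hn_mem_top hC) 1 ∈ Φ := by
  obtain ⟨-, hchain, hmax⟩ := hΦ
  have hch : IsChain (KGle n R) (insert (face n R n (hn_mem_top hC) 1) Φ) := by
    rintro x (rfl | hx) y (rfl | hy) hne
    · exact absurd rfl hne
    · exact Or.inr (kgle_top hC y)
    · exact Or.inl (kgle_top hC x)
    · exact hchain hx hy hne
  have := hmax _ (Set.subset_univ _) hch (Set.subset_insert _ _)
  rw [← this]
  exact Set.mem_insert _ _

lemma flag_injOn_rank (hC : GenStringC n R) {Φ : Set (KF n R)}
    (hchain : IsChain (KGle n R) Φ) :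
    Set.InjOn (fun x : KF n R => x.1.1) Φ := by
  intro x hx y hy hrk
  by_contra hne
  rcases hchain hx hy hne with hle | hle
  · exact hne (kgle_eq_of_rank_eq hC hle hrk)
  · exact hne (kgle_eq_of_rank_eq hC hle hrk.symm).symm

lemma flag_rank_sub {Φ : Set (KF n R)} :
    (fun x : KF n R => x.1.1) '' Φ ⊆ Set.Icc (-1 : ℤ) n := by
  rintro m ⟨x, hx, rfl⟩
  exact x.1.2

lemma flag_finite (hC : GenStringC n R) {Φ : Set (KF n R)}
    (hchain : IsChain (KGle n R) Φ) : Φ.Finite :=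
  Set.Finite.of_finite_image ((Set.finite_Icc (-1 : ℤ) n).subset flag_rank_sub)
    (flag_injOn_rank hC hchain)

/-- Every flag contains a face of each rank. -/
lemma flag_ranks (hC : GenStringC n R) {Φ : Set (KF n R)}
    (hΦ : @IsFlagOf (KF n R) (KPO hC) Set.univ Φ) :
    ∀ m ∈ Set.Icc (-1 : ℤ) n, ∃ x ∈ Φ, x.1.1 = m := by
  intro m hm
  by_contra hcon
  push_neg at hcon
  obtain ⟨-, hchain, hmax⟩ := hΦ
  have hbot := bot_mem_flag hC ⟨Set.subset_univ _, hchain, hmax⟩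
  have htop := top_mem_flag hC ⟨Set.subset_univ _, hchain, hmax⟩
  rw [Set.mem_Icc] at hm
  -- the set of faces of Φ of rank < m has a maximum, of rank > m has a minimum
  have hAfin : ({x ∈ Φ | x.1.1 < m}).Finite := (flag_finite hC hchain).subset (Set.sep_subset _ _)
  have hBfin : ({x ∈ Φ | m < x.1.1}).Finite := (flag_finite hC hchain).subset (Set.sep_subset _ _)
  have hAne : ({x ∈ Φ | x.1.1 < m}).Nonempty := by
    refine ⟨face n R (-1) (hn_mem_bot hC) 1, hbot, ?_⟩
    have hmne : m ≠ -1 := fun he => hcon _ hbot (by rw [he]; rfl)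
    show (-1 : ℤ) < m
    omega
  have hBne : ({x ∈ Φ | m < x.1.1}).Nonempty := by
    refine ⟨face n R n (hn_mem_top hC) 1, htop, ?_⟩
    have hmne : m ≠ n := fun he => hcon _ htop (by rw [he]; rfl)
    show m < n
    omega
  obtain ⟨x, hxA, hxmax⟩ := Set.exists_max_image _ (fun x : KF n R => x.1.1) hAfin hAne
  obtain ⟨y, hyB, hymin⟩ := Set.exists_min_image _ (fun x : KF n R => x.1.1) hBfin hBne
  obtain ⟨i, hi, g, rfl⟩ := exists_face_rep x
  obtain ⟨j, hj, h, rfl⟩ := exists_face_rep y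
  have him : i < m := hxA.2
  have hmj : m < j := hyB.2
  have hmIcc : m ∈ Set.Icc (-1 : ℤ) n := Set.mem_Icc.2 ⟨hm.1, hm.2⟩
  have hxy : KGle n R (face n R i hi g) (face n R j hj h) := by
    have hne : face n R i hi g ≠ face n R j hj h := by
      intro he
      have : i = j := congrArg (fun z : KF n R => z.1.1) he
      omega
    rcases hchain hxA.1 hyB.1 hne with hle | hle
    · exact hle
    · have : j ≤ i := hle.1
      omega
  rw [kgle_iff hC hi hj] at hxy
  obtain ⟨α, hα, β, hβ, hαβ⟩ := hxy.2
  -- the filling face of rank m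
  set w := face n R m hmIcc (β * h) with hw
  have hxw : KGle n R (face n R i hi g) w := by
    rw [kgle_iff hC hi hmIcc]
    refine ⟨by omega, ?_⟩
    have : g * (β * h)⁻¹ = α := by
      have hαβ' : α * β = g * h⁻¹ := hαβ
      have hg : g = α * β * h := by rw [hαβ']; group
      rw [hg]; group
    rw [this]
    exact subset_mul_left _ _ hα
  have hwy : KGle n R w (face n R j hj h) := by
    rw [kgle_iff hC hmIcc hj]
    refine ⟨by omega, ?_⟩
    have : (β * h) * h⁻¹ = β := by group
    rw [this]
    exact subset_mul_right _ _ hβ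
  have hch : IsChain (KGle n R) (insert w Φ) := by
    rintro a (rfl | ha) b (rfl | hb) hne
    · exact absurd rfl hne
    · -- a = w, b ∈ Φ
      have hbm : b.1.1 ≠ m := fun he => hcon b hb he
      rcases lt_or_gt_of_ne hbm with hlt | hgt
      · refine Or.inr (kgle_trans hC ?_ hxw)
        have hble : b.1.1 ≤ i := hxmax b ⟨hb, hlt⟩
        by_cases hbe : b = face n R i hi g
        · rw [hbe]; exact kgle_refl _
        · rcases hchain hb hxA.1 hbe with h1 | h1
          · exact h1
          · have : i ≤ b.1.1 := h1.1
            have : b.1.1 = i := by omega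
            exact absurd (kgle_eq_of_rank_eq hC h1 this.symm).symm hbe
      · refine Or.inl (kgle_trans hC hwy ?_)
        have hble : j ≤ b.1.1 := hymin b ⟨hb, hgt⟩
        by_cases hbe : b = face n R j hj h
        · rw [hbe]; exact kgle_refl _
        · rcases hchain hyB.1 hb (fun he => hbe he.symm) with h1 | h1
          · exact h1
          · have : b.1.1 ≤ j := h1.1
            have : b.1.1 = j := by omega
            exact absurd (kgle_eq_of_rank_eq hC h1 this) hbe
    · -- a ∈ Φ, b = w : symmetric
      have ham : a.1.1 ≠ m := fun he => hcon a ha he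
      rcases lt_or_gt_of_ne ham with hlt | hgt
      · refine Or.inl (kgle_trans hC ?_ hxw)
        have hale : a.1.1 ≤ i := hxmax a ⟨ha, hlt⟩
        by_cases hae : a = face n R i hi g
        · rw [hae]; exact kgle_refl _
        · rcases hchain ha hxA.1 hae with h1 | h1
          · exact h1
          · have : i ≤ a.1.1 := h1.1
            have : a.1.1 = i := by omega
            exact absurd (kgle_eq_of_rank_eq hC h1 this.symm).symm hae
      · refine Or.inr (kgle_trans hC hwy ?_)
        have hale : j ≤ a.1.1 := hymin a ⟨ha, hgt⟩
        by_cases hae : a = face n R j hj h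
        · rw [hae]; exact kgle_refl _
        · rcases hchain hyB.1 ha (fun he => hae he.symm) with h1 | h1
          · exact h1
          · have : a.1.1 ≤ j := h1.1
            have : a.1.1 = j := by omega
            exact absurd (kgle_eq_of_rank_eq hC h1 this) hae
    · exact hchain ha hb hne
  have := hmax _ (Set.subset_univ _) hch (Set.subset_insert _ _)
  have hwΦ : w ∈ Φ := by rw [← this]; exact Set.mem_insert _ _
  exact hcon w hwΦ rfl

end
end GSC
namespace GSC
section
variable {G : Type*} [Group G] {n : ℤ} {R : ℤ → Subgroup G}

lemma flag_common_rep (hC : GenStringC n R) {Φ : Set (KF n R)}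
    (hΦ : @IsFlagOf (KF n R) (KPO hC) Set.univ Φ) (t : ℕ) :
    ∃ g : G, ∀ m (hm : m ∈ Set.Icc (-1 : ℤ) n), n - (t : ℤ) ≤ m → face n R m hm g ∈ Φ := by
  induction t with
  | zero =>
    obtain ⟨x, hx, hrk⟩ := flag_ranks hC hΦ n (hn_mem_top hC)
    obtain ⟨j, hj, h, rfl⟩ := exists_face_rep x
    have hjn : j = n := hrk
    subst hjn
    refine ⟨h, fun m hm hge => ?_⟩
    have hmn : m = j := by rw [Set.mem_Icc] at hm; push_cast at hge; omega
    subst hmn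
    rw [face_top_eq hC hm hj h h]
    exact hx
  | succ t ih =>
    obtain ⟨g, hg⟩ := ih
    by_cases hlow : n - ((t : ℤ) + 1) < -1
    · refine ⟨g, fun m hm hge => hg m hm ?_⟩
      rw [Set.mem_Icc] at hm
      push_cast at hge ⊢
      omega
    · push_neg at hlow
      obtain ⟨m, hmeq⟩ : ∃ m : ℤ, m = n - ((t : ℤ) + 1) := ⟨_, rfl⟩
      have hmIcc : m ∈ Set.Icc (-1 : ℤ) n := by rw [Set.mem_Icc]; omega
      have hm1Icc : m + 1 ∈ Set.Icc (-1 : ℤ) n := by rw [Set.mem_Icc]; omega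
      obtain ⟨x, hx, hrk⟩ := flag_ranks hC hΦ m hmIcc
      obtain ⟨i, hi, c, rfl⟩ := exists_face_rep x
      have him : i = m := hrk
      subst him
      have hxf : face n R (i + 1) hm1Icc g ∈ Φ := hg (i + 1) hm1Icc (by push_cast; omega)
      have hle : KGle n R (face n R i hi c) (face n R (i + 1) hm1Icc g) := by
        have hne : face n R i hi c ≠ face n R (i + 1) hm1Icc g := by
          intro he
          have : i = i + 1 := congrArg (fun z : KF n R => z.1.1) he
          omega
        rcases hΦ.2.1 hx hxf hne with h1 | h1
        · exact h1
        · have : i + 1 ≤ i := h1.1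
          omega
      rw [kgle_iff hC hi hm1Icc] at hle
      have hidx : i + 1 - 1 = i := by ring
      rw [hidx] at hle
      obtain ⟨α, hα, β, hβ, hαβ⟩ := hle.2
      have hαβ' : α * β = c * g⁻¹ := hαβ
      refine ⟨β * g, fun m' hm' hge => ?_⟩
      have hm'Icc := Set.mem_Icc.1 hm'
      by_cases hcase : i + 1 ≤ m'
      · have heq : face n R m' hm' (β * g) = face n R m' hm' g := by
          rw [face_eq_iff]
          have : g * (β * g)⁻¹ = β⁻¹ := by group
          rw [this]
          exact Gminus_le_Gsub hm'Icc.2 (by omega) (inv_mem hβ)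
        rw [heq]
        exact hg m' hm' (by push_cast; omega)
      · have hm'i : m' = i := by push_cast at hge; omega
        subst hm'i
        have heq : face n R m' hm' (β * g) = face n R m' hi c := by
          rw [face_eq_iff]
          have hc : c = α * β * g := by rw [hαβ']; group
          have : c * (β * g)⁻¹ = α := by rw [hc]; group
          rw [this]
          exact Gplus_le_Gsub hm'Icc.1 (by omega) hα
        rw [heq]
        exact hx

lemma flag_eq_baseFlag (hC : GenStringC n R) {Φ : Set (KF n R)}
    (hΦ : @IsFlagOf (KF n R) (KPO hC) Set.univ Φ) :
    ∃ g : G, Φ = baseFlag n R g := by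
  obtain ⟨g, hg⟩ := flag_common_rep hC hΦ (n + 1).toNat
  refine ⟨g, ?_⟩
  have hsub : baseFlag n R g ⊆ Φ := by
    rintro x ⟨i, hi, rfl⟩
    refine hg i hi ?_
    rw [Set.mem_Icc] at hi
    omega
  exact (baseFlag_isFlag hC g).2.2 Φ (Set.subset_univ _) hΦ.2.1 hsub

lemma baseFlag_ncard (hC : GenStringC n R) (g : G) :
    (baseFlag n R g).ncard = (n + 2).toNat := by
  have him : (fun x : KF n R => x.1.1) '' (baseFlag n R g) = Set.Icc (-1 : ℤ) n := by
    apply subset_antisymm flag_rank_sub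
    intro m hm
    exact ⟨face n R m hm g, face_mem_baseFlag hm g, rfl⟩
  have hinj := flag_injOn_rank hC (baseFlag_isChain hC g)
  have hcard := Set.ncard_image_of_injOn hinj
  rw [him] at hcard
  rw [← hcard, ← Finset.coe_Icc, Set.ncard_coe_finset, Int.card_Icc]
  omega

end
end GSC
namespace GSC
section
variable {G : Type*} [Group G] {n : ℤ} {R : ℤ → Subgroup G}

lemma GamI_singleton (m : ℤ) : GamI R {m} = R (-1) ⊔ R m := by
  rw [GamI]
  congr 1
  exact iSup_singleton (f := fun i => R i)

lemma R_inf_Gsub (hC : GenStringC n R) {m : ℤ} (hm0 : 0 ≤ m) (hmn : m ≤ n - 1) :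
    R m ⊓ Gsub R n m = R (-1) := by
  have h1 := hC.inter {m} (Set.Icc (-1) n \ {m})
    (by intro x hx; rcases hx with rfl; rw [Set.mem_Icc]; omega)
    (fun x hx => hx.1)
  have h2 : {m} ∩ (Set.Icc (-1 : ℤ) n \ {m}) = (∅ : Set ℤ) := by
    ext x
    simp only [Set.mem_inter_iff, Set.mem_singleton_iff, Set.mem_diff, Set.mem_Icc,
      Set.mem_empty_iff_false, iff_false, not_and]
    rintro rfl
    intro h
    exact fun hh => hh rfl
  rw [h2, GamI_empty, GamI_singleton] at h1
  rw [sup_eq_right.2 (Rneg_le_R hC (by omega) (by omega))] at h1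
  exact h1

lemma two_between_lemma (hC : GenStringC n R) (F G' : KF n R)
    (hlt : (KPO hC).lt F G') (hrk : G'.1.1 = F.1.1 + 2) :
    ∃ H H' : KF n R, H ≠ H' ∧ (KPO hC).lt F H ∧ (KPO hC).lt H G' ∧
      (KPO hC).lt F H' ∧ (KPO hC).lt H' G' := by
  obtain ⟨i, hi, φ, rfl⟩ := exists_face_rep F
  obtain ⟨j, hj, ψ, rfl⟩ := exists_face_rep G'
  have hj2 : j = i + 2 := hrk
  subst hj2
  have hiIcc := Set.mem_Icc.1 hi
  have hjIcc := Set.mem_Icc.1 hj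
  have hle := ((kpo_lt_iff hC _ _).1 hlt).1
  rw [kgle_iff hC hi hj] at hle
  obtain ⟨α, hα, β, hβ, hαβ⟩ := hle.2
  have hαβ' : α * β = φ * ψ⁻¹ := hαβ
  have hidx : i + 2 - 1 = i + 1 := by ring
  rw [hidx] at hβ
  have hmIcc : i + 1 ∈ Set.Icc (-1 : ℤ) n := Set.mem_Icc.2 ⟨by omega, by omega⟩
  obtain ⟨r, hrR, hrn⟩ := SetLike.exists_of_lt (hC.ends_lt (i + 1) ⟨by omega, by omega⟩)
  have hφ : φ = α * β * ψ := by rw [hαβ']; group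
  -- the two intermediate faces
  refine ⟨face n R (i + 1) hmIcc (β * ψ), face n R (i + 1) hmIcc (r * (β * ψ)), ?_, ?_, ?_, ?_, ?_⟩
  · intro he
    rw [face_eq_iff] at he
    have hr' : r * (β * ψ) * (β * ψ)⁻¹ = r := by group
    rw [hr'] at he
    have : r ∈ R (i + 1) ⊓ Gsub R n (i + 1) := ⟨hrR, he⟩
    rw [R_inf_Gsub hC (by omega) (by omega)] at this
    exact hrn this
  · refine (kpo_lt_iff hC _ _).2 ⟨?_, by show i < i + 1; omega⟩
    rw [kgle_iff hC hi hmIcc]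
    refine ⟨by omega, ?_⟩
    have : φ * (β * ψ)⁻¹ = α := by rw [hφ]; group
    rw [this]
    exact subset_mul_left _ _ hα
  · refine (kpo_lt_iff hC _ _).2 ⟨?_, by show i + 1 < i + 2; omega⟩
    rw [kgle_iff hC hmIcc hj]
    refine ⟨by omega, ?_⟩
    have : (β * ψ) * ψ⁻¹ = β := by group
    rw [this, hidx]
    exact subset_mul_right _ _ hβ
  · refine (kpo_lt_iff hC _ _).2 ⟨?_, by show i < i + 1; omega⟩
    rw [kgle_iff hC hi hmIcc]
    refine ⟨by omega, ?_⟩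
    have : φ * (r * (β * ψ))⁻¹ = α * r⁻¹ := by rw [hφ]; group
    rw [this]
    refine subset_mul_left _ _ (mul_mem hα (inv_mem ?_))
    exact R_le_GamI R (Set.mem_Icc.2 ⟨le_rfl, by omega⟩) hrR
  · refine (kpo_lt_iff hC _ _).2 ⟨?_, by show i + 1 < i + 2; omega⟩
    rw [kgle_iff hC hmIcc hj]
    refine ⟨by omega, ?_⟩
    have : (r * (β * ψ)) * ψ⁻¹ = r * β := by group
    rw [this, hidx]
    refine subset_mul_right _ _ (mul_mem ?_ hβ)
    exact R_le_GamI R (Set.mem_Icc.2 ⟨by omega, le_rfl⟩) hrR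

lemma strong_conn_lemma (hC : GenStringC n R) (F G' : KF n R)
    (hle : KGle n R F G') (hgap : 2 ≤ G'.1.1 - F.1.1 - 1) :
    @ConnIn (KF n R) (KPO hC) F G' := by
  letI := KPO hC
  obtain ⟨i, hi, φ, rfl⟩ := exists_face_rep F
  obtain ⟨j, hj, ψ, rfl⟩ := exists_face_rep G'
  have hiIcc := Set.mem_Icc.1 hi
  have hjIcc := Set.mem_Icc.1 hj
  have hgap' : 2 ≤ j - i - 1 := hgap
  have hij : i + 3 ≤ j := by omega
  rw [kgle_iff hC hi hj] at hle
  obtain ⟨α₀, hα₀, β₀, hβ₀, hαβ₀⟩ := hle.2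
  have hαβ₀' : α₀ * β₀ = φ * ψ⁻¹ := hαβ₀
  set Δ : Subgroup G := Gplus R n (i + 1) ⊓ Gminus R (j - 1) with hΔdef
  set c : G := β₀ * ψ with hcdef
  -- faces of the open section
  have in_sec : ∀ δ ∈ Δ, ∀ m (hm : m ∈ Set.Icc (-1 : ℤ) n), i < m → m < j →
      (face n R i hi φ) < (face n R m hm (δ * c)) ∧
      (face n R m hm (δ * c)) < (face n R j hj ψ) := by
    intro δ hδ m hm him hmj
    constructor
    · refine (kpo_lt_iff hC _ _).2 ⟨?_, him⟩
      rw [kgle_iff hC hi hm]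
      refine ⟨by omega, ?_⟩
      have hφ : φ = α₀ * β₀ * ψ := by rw [hαβ₀']; group
      have : φ * (δ * c)⁻¹ = α₀ * δ⁻¹ := by rw [hcdef, hφ]; group
      rw [this]
      exact subset_mul_left _ _ (mul_mem hα₀ (inv_mem hδ.1))
    · refine (kpo_lt_iff hC _ _).2 ⟨?_, hmj⟩
      rw [kgle_iff hC hm hj]
      refine ⟨by omega, ?_⟩
      have : (δ * c) * ψ⁻¹ = δ * β₀ := by rw [hcdef]; group
      rw [this]
      exact subset_mul_right _ _ (mul_mem hδ.2 hβ₀)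
  -- every face of the open section has this shape
  have sec_rep : ∀ H : KF n R, (face n R i hi φ) < H → H < (face n R j hj ψ) →
      ∃ δ ∈ Δ, ∃ m, ∃ hm : m ∈ Set.Icc (-1 : ℤ) n, i < m ∧ m < j ∧
        H = face n R m hm (δ * c) := by
    intro H h1 h2
    obtain ⟨m, hm, χ, rfl⟩ := exists_face_rep H
    have him : i < m := ((kpo_lt_iff hC _ _).1 h1).2
    have hmj : m < j := ((kpo_lt_iff hC _ _).1 h2).2
    have hle1 := ((kpo_lt_iff hC _ _).1 h1).1
    have hle2 := ((kpo_lt_iff hC _ _).1 h2).1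
    rw [kgle_iff hC hi hm] at hle1
    rw [kgle_iff hC hm hj] at hle2
    obtain ⟨α₁, hα₁, β₁, hβ₁, hc1⟩ := hle1.2
    obtain ⟨α₂, hα₂, β₂, hβ₂, hc2⟩ := hle2.2
    have hc1' : α₁ * β₁ = φ * χ⁻¹ := hc1
    have hc2' : α₂ * β₂ = χ * ψ⁻¹ := hc2
    have hswap : β₁ * α₂ ∈ (Gplus R n (m + 1) : Set G) * (Gminus R (m - 1) : Set G) := by
      rw [← gm_gp_comm hC (by omega) (by omega) (by omega)]
      exact ⟨β₁, hβ₁, α₂, hα₂, rfl⟩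
    obtain ⟨α₂', hα₂', β₁', hβ₁', hsw⟩ := hswap
    have hsw' : α₂' * β₁' = β₁ * α₂ := hsw
    have hkey : α₁ * α₂' * (β₁' * β₂) = α₀ * β₀ := by
      calc α₁ * α₂' * (β₁' * β₂) = α₁ * (α₂' * β₁') * β₂ := by group
        _ = α₁ * (β₁ * α₂) * β₂ := by rw [hsw']
        _ = (α₁ * β₁) * (α₂ * β₂) := by group
        _ = (φ * χ⁻¹) * (χ * ψ⁻¹) := by rw [hc1', hc2']
        _ = φ * ψ⁻¹ := by group
        _ = α₀ * β₀ := hαβ₀'.symm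
    have hrepr : β₁' * β₂ * β₀⁻¹ = α₂'⁻¹ * α₁⁻¹ * α₀ := by
      have h3 : α₂'⁻¹ * α₁⁻¹ * (α₁ * α₂' * (β₁' * β₂)) = β₁' * β₂ := by group
      rw [hkey] at h3
      rw [← h3]
      group
    refine ⟨β₁' * β₂ * β₀⁻¹, Subgroup.mem_inf.2 ⟨?_, ?_⟩, m, hm, him, hmj, ?_⟩
    · rw [hrepr]
      exact mul_mem (mul_mem (inv_mem (Gplus_anti (by omega) hα₂')) (inv_mem hα₁)) hα₀
    · exact mul_mem (mul_mem (Gminus_mono (by omega) hβ₁') hβ₂) (inv_mem hβ₀)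
    · rw [face_eq_iff]
      have hχ : χ = α₂ * β₂ * ψ := by rw [hc2']; group
      have : β₁' * β₂ * β₀⁻¹ * c * χ⁻¹ = β₁' * α₂⁻¹ := by rw [hcdef, hχ]; group
      rw [this]
      exact mul_mem (Gminus_le_Gsub (by omega) (by omega) hβ₁')
        (inv_mem (Gplus_le_Gsub (by omega) (by omega) hα₂))
  -- Δ is generated by the middle R's
  have hΔgen : (Δ : Subgroup G) = Subgroup.closure (⋃ k ∈ Set.Icc (i + 1) (j - 1), (R k : Set G)) := by
    have h1 := hC.inter (Set.Icc (i + 1) n) (Set.Icc (-1) (j - 1))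
      (Set.Icc_subset_Icc (by omega) le_rfl)
      (Set.Icc_subset_Icc le_rfl (by omega))
    have h2 : Set.Icc (i + 1) n ∩ Set.Icc (-1 : ℤ) (j - 1) = Set.Icc (i + 1) (j - 1) := by
      ext x
      simp only [Set.mem_inter_iff, Set.mem_Icc]
      omega
    rw [h2] at h1
    rw [hΔdef]
    show GamI R (Set.Icc (i + 1) n) ⊓ GamI R (Set.Icc (-1) (j - 1)) = _
    rw [h1]
    exact GamI_eq_closure R _ ⟨i + 1, Set.mem_Icc.2 ⟨le_rfl, by omega⟩,
      Rneg_le_R hC (by omega) (by omega)⟩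
  -- the relation of ConnIn
  set Rel : KF n R → KF n R → Prop := fun a b =>
    (face n R i hi φ) < a ∧ a < (face n R j hj ψ) ∧
    (face n R i hi φ) < b ∧ b < (face n R j hj ψ) ∧ (a ≤ b ∨ b ≤ a) with hRel
  have hRelSymm : Symmetric Rel := by
    rintro a b ⟨u1, u2, u3, u4, u5⟩
    exact ⟨u3, u4, u1, u2, u5.symm⟩
  have hE : (i + 1) ∈ Set.Icc (-1 : ℤ) n := Set.mem_Icc.2 ⟨by omega, by omega⟩
  -- connect every section face to the base face E = Γ_{i+1} c
  have conn : ∀ δ (hδ : δ ∈ Δ), ∀ m (hm : m ∈ Set.Icc (-1 : ℤ) n), i < m → m < j →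
      Relation.ReflTransGen Rel (face n R m hm (δ * c)) (face n R (i + 1) hE (1 * c)) := by
    intro δ hδ
    rw [hΔdef] at hδ
    rw [show Gplus R n (i+1) ⊓ Gminus R (j-1) = Δ from hΔdef.symm, hΔgen] at hδ
    induction hδ using Subgroup.closure_induction_left with
    | one =>
      intro m hm him hmj
      by_cases hme : m = i + 1
      · subst hme
        rfl
      · refine Relation.ReflTransGen.single ?_
        have hsec1 := in_sec 1 (one_mem Δ) m hm him hmj
        have hsec2 := in_sec 1 (one_mem Δ) (i + 1) hE (by omega) (by omega)
        refine ⟨hsec1.1, hsec1.2, hsec2.1, hsec2.2, ?_⟩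
        rcases le_total m (i + 1) with h | h
        · exact Or.inl (face_le_face_self hC hm hE h _)
        · exact Or.inr (face_le_face_self hC hE hm h _)
    | mul_left r hr δ' hδ' ih =>
      intro m hm him hmj
      obtain ⟨k, hk, hrk⟩ := Set.mem_iUnion₂.1 hr
      rw [Set.mem_Icc] at hk
      have hδ'Δ : δ' ∈ Δ := by
        rw [hΔgen]
        exact hδ'
      have hrΔ : r ∈ Δ := by
        refine Subgroup.mem_inf.2 ⟨?_, ?_⟩
        · exact Gplus_anti (le_refl (i+1)) (R_le_GamI R (Set.mem_Icc.2 ⟨hk.1, by omega⟩) hrk)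
        · exact R_le_GamI R (Set.mem_Icc.2 ⟨by omega, hk.2⟩) hrk
      have hrδΔ : r * δ' ∈ Δ := mul_mem hrΔ hδ'Δ
      -- pick an intermediate rank different from k
      set m' : ℤ := if k = i + 1 then i + 2 else i + 1 with hm'def
      have hm'ne : m' ≠ k := by
        rw [hm'def]
        split <;> omega
      have him' : i < m' := by rw [hm'def]; split <;> omega
      have hm'j : m' < j := by rw [hm'def]; split <;> omega
      have hm'Icc : m' ∈ Set.Icc (-1 : ℤ) n := by
        rw [Set.mem_Icc, hm'def]; split <;> omega
      -- step 1 : move to rank m'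
      have step1 : Relation.ReflTransGen Rel (face n R m hm (r * δ' * c))
          (face n R m' hm'Icc (r * δ' * c)) := by
        by_cases hme : m = m'
        · subst hme
          rfl
        · refine Relation.ReflTransGen.single ?_
          have hsec1 := in_sec (r * δ') hrδΔ m hm him hmj
          have hsec2 := in_sec (r * δ') hrδΔ m' hm'Icc him' hm'j
          refine ⟨hsec1.1, hsec1.2, hsec2.1, hsec2.2, ?_⟩
          rcases le_total m m' with h | h
          · exact Or.inl (face_le_face_self hC hm hm'Icc h _)
          · exact Or.inr (face_le_face_self hC hm'Icc hm h _)
      -- step 2 : delete r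
      have step2 : face n R m' hm'Icc (r * δ' * c) = face n R m' hm'Icc (δ' * c) := by
        rw [face_eq_iff]
        have : δ' * c * (r * δ' * c)⁻¹ = r⁻¹ := by group
        rw [this]
        refine inv_mem (R_le_GamI R ?_ hrk)
        simp only [Set.mem_diff, Set.mem_Icc, Set.mem_singleton_iff]
        exact ⟨⟨by omega, by omega⟩, hm'ne.symm⟩
      have step3 : Relation.ReflTransGen Rel (face n R m' hm'Icc (r * δ' * c))
          (face n R (i + 1) hE (1 * c)) := by
        rw [step2]
        exact ih m' hm'Icc him' hm'j
      exact step1.trans step3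
    | inv_mul_cancel r hr δ' hδ' ih =>
      intro m hm him hmj
      obtain ⟨k, hk, hrk⟩ := Set.mem_iUnion₂.1 hr
      rw [Set.mem_Icc] at hk
      have hδ'Δ : δ' ∈ Δ := by
        rw [hΔgen]
        exact hδ'
      have hrΔ : r⁻¹ ∈ Δ := by
        refine Subgroup.mem_inf.2 ⟨?_, ?_⟩
        · exact inv_mem (Gplus_anti (le_refl (i+1))
            (R_le_GamI R (Set.mem_Icc.2 ⟨hk.1, by omega⟩) hrk))
        · exact inv_mem (R_le_GamI R (Set.mem_Icc.2 ⟨by omega, hk.2⟩) hrk)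
      have hrδΔ : r⁻¹ * δ' ∈ Δ := mul_mem hrΔ hδ'Δ
      set m' : ℤ := if k = i + 1 then i + 2 else i + 1 with hm'def
      have hm'ne : m' ≠ k := by
        rw [hm'def]
        split <;> omega
      have him' : i < m' := by rw [hm'def]; split <;> omega
      have hm'j : m' < j := by rw [hm'def]; split <;> omega
      have hm'Icc : m' ∈ Set.Icc (-1 : ℤ) n := by
        rw [Set.mem_Icc, hm'def]; split <;> omega
      have step1 : Relation.ReflTransGen Rel (face n R m hm (r⁻¹ * δ' * c))
          (face n R m' hm'Icc (r⁻¹ * δ' * c)) := by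
        by_cases hme : m = m'
        · subst hme
          rfl
        · refine Relation.ReflTransGen.single ?_
          have hsec1 := in_sec (r⁻¹ * δ') hrδΔ m hm him hmj
          have hsec2 := in_sec (r⁻¹ * δ') hrδΔ m' hm'Icc him' hm'j
          refine ⟨hsec1.1, hsec1.2, hsec2.1, hsec2.2, ?_⟩
          rcases le_total m m' with h | h
          · exact Or.inl (face_le_face_self hC hm hm'Icc h _)
          · exact Or.inr (face_le_face_self hC hm'Icc hm h _)
      have step2 : face n R m' hm'Icc (r⁻¹ * δ' * c) = face n R m' hm'Icc (δ' * c) := by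
        rw [face_eq_iff]
        have : δ' * c * (r⁻¹ * δ' * c)⁻¹ = r := by group
        rw [this]
        refine R_le_GamI R ?_ hrk
        simp only [Set.mem_diff, Set.mem_Icc, Set.mem_singleton_iff]
        exact ⟨⟨by omega, by omega⟩, hm'ne.symm⟩
      have step3 : Relation.ReflTransGen Rel (face n R m' hm'Icc (r⁻¹ * δ' * c))
          (face n R (i + 1) hE (1 * c)) := by
        rw [step2]
        exact ih m' hm'Icc him' hm'j
      exact step1.trans step3
  -- finish
  intro H K h1 h2 h3 h4
  obtain ⟨δ, hδ, m, hm, him, hmj, rfl⟩ := sec_rep H h1 h2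
  obtain ⟨ε, hε, m'', hm'', him'', hm''j, rfl⟩ := sec_rep K h3 h4
  exact (conn δ hδ m hm him hmj).trans
    ((haveI : Std.Symm Rel := ⟨fun a b h => hRelSymm h⟩; (Relation.ReflTransGen.symmetric (r := Rel)).symm _ _) (conn ε hε m'' hm'' him'' hm''j))

end
end GSC
namespace GSC
section
variable {G : Type*} [Group G] {n : ℤ} {R : ℤ → Subgroup G}

lemma rmulKF_face (g : G) {i : ℤ} (hi : i ∈ Set.Icc (-1 : ℤ) n) (φ : G) :
    rmulKF n R g (face n R i hi φ) = face n R i hi (φ * g) := rfl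

lemma kgle_rmul_iff (hC : GenStringC n R) (g : G) (x y : KF n R) :
    KGle n R x y ↔ KGle n R (rmulKF n R g x) (rmulKF n R g y) := by
  obtain ⟨i, hi, φ, rfl⟩ := exists_face_rep x
  obtain ⟨j, hj, ψ, rfl⟩ := exists_face_rep y
  rw [rmulKF_face, rmulKF_face, kgle_iff hC hi hj, kgle_iff hC hi hj]
  have : (φ * g) * (ψ * g)⁻¹ = φ * ψ⁻¹ := by group
  rw [this]

/-- Right multiplication as an order isomorphism. -/
def rmulIso (hC : GenStringC n R) (g : G) :
    @OrderIso (KF n R) (KF n R) (KPO hC).toLE (KPO hC).toLE where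
  toFun := rmulKF n R g
  invFun := rmulKF n R g⁻¹
  left_inv := fun x => by
    obtain ⟨i, hi, φ, rfl⟩ := exists_face_rep x
    rw [rmulKF_face, rmulKF_face, mul_inv_cancel_right]
  right_inv := fun x => by
    obtain ⟨i, hi, φ, rfl⟩ := exists_face_rep x
    rw [rmulKF_face, rmulKF_face, inv_mul_cancel_right]
  map_rel_iff' := by
    intro a b
    exact (kgle_rmul_iff hC g a b).symm

lemma rmul_image_baseFlag (g φ : G) :
    rmulKF n R g '' baseFlag n R φ = baseFlag n R (φ * g) := by
  ext x
  constructor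
  · rintro ⟨y, ⟨i, hi, rfl⟩, rfl⟩
    rw [rmulKF_face]
    exact face_mem_baseFlag hi (φ * g)
  · rintro ⟨i, hi, rfl⟩
    exact ⟨face n R i hi φ, face_mem_baseFlag hi φ, (rmulKF_face g hi φ).symm⟩

lemma flag_trans_g (hC : GenStringC n R) {Φ Ψ : Set (KF n R)}
    (hΦ : @IsFlagOf (KF n R) (KPO hC) Set.univ Φ)
    (hΨ : @IsFlagOf (KF n R) (KPO hC) Set.univ Ψ) :
    ∃ g : G, rmulKF n R g '' Φ = Ψ := by
  obtain ⟨a, rfl⟩ := flag_eq_baseFlag hC hΦ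
  obtain ⟨b, rfl⟩ := flag_eq_baseFlag hC hΨ
  refine ⟨a⁻¹ * b, ?_⟩
  rw [rmul_image_baseFlag, mul_inv_cancel_left]

end
end GSC

open GSC in
theorem kf_is_regular_incidence_complex' {G : Type*} [Group G]
    (n : ℤ) (R : ℤ → Subgroup G) (hC : GenStringC n R) :
    ∃ P : PartialOrder (KF n R),
      (∀ x y : KF n R, P.le x y ↔ KGle n R x y) ∧
      ∃ B : @BoundedOrder (KF n R) P.toLE,
        @IncComplex (KF n R) P B n (fun x => x.1.1) ∧
        @IsRegularIC (KF n R) P ∧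
        (∀ g : G, ∀ x y : KF n R,
          KGle n R x y ↔ KGle n R (rmulKF n R g x) (rmulKF n R g y)) ∧
        (∀ Φ Ψ : Set (KF n R),
          @IsFlagOf (KF n R) P Set.univ Φ → @IsFlagOf (KF n R) P Set.univ Ψ →
          ∃ g : G, rmulKF n R g '' Φ = Ψ) := by
  refine ⟨KPO hC, fun x y => Iff.rfl, KBO hC, ?_, ?_, ?_, ?_⟩
  · -- IncComplex
    letI P := KPO hC
    letI B := KBO hC
    refine ⟨rfl, rfl, ?_, ?_, ?_, ?_, ?_⟩
    · intro a b hab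
      exact ((kpo_lt_iff hC a b).1 hab).2
    · -- chain_flag
      intro c hc
      obtain ⟨M, hM, hcM⟩ := hc.exists_maxChain
      have hflag : @IsFlagOf (KF n R) (KPO hC) Set.univ M :=
        ⟨Set.subset_univ _, hM.1, fun Ψ _ hΨc hsub => (hM.2 hΨc hsub).symm⟩
      obtain ⟨g, hg⟩ := flag_eq_baseFlag hC hflag
      refine ⟨M, hcM, hflag, ?_⟩
      rw [hg]
      exact baseFlag_ncard hC g
    · -- flag_rk
      intro Φ hΦ m hm
      obtain ⟨g, rfl⟩ := flag_eq_baseFlag hC hΦ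
      exact ⟨face n R m hm g, face_mem_baseFlag hm g, rfl⟩
    · -- strong_conn
      intro F G' hle hgap
      exact strong_conn_lemma hC F G' hle hgap
    · -- two_between
      intro F G' hlt hrk
      exact two_between_lemma hC F G' hlt hrk
  · -- IsRegularIC
    intro Φ Ψ hΦ hΨ
    obtain ⟨g, hg⟩ := flag_trans_g hC hΦ hΨ
    exact ⟨rmulIso hC g, hg⟩
  · exact fun g x y => kgle_rmul_iff hC g x y
  · intro Φ Ψ hΦ hΨ
    exact flag_trans_g hC hΦ hΨ


/-- the poset `K(Γ)` associated with a generalized string C-group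
`Γ = ⟨R_{-1},…,R_n⟩` (faces: right cosets of the `Γ_i`, order: `KGle`) is a
regular incidence complex of rank `n`, on which `Γ` acts flag-transitively by
right multiplication (and by order-automorphisms). -/
theorem kf_is_regular_incidence_complex {G : Type*} [Group G]
    (n : ℤ) (R : ℤ → Subgroup G) (hC : GenStringC n R) :
    ∃ P : PartialOrder (KF n R),
      (∀ x y : KF n R, P.le x y ↔ KGle n R x y) ∧
      ∃ B : @BoundedOrder (KF n R) P.toLE,
        @IncComplex (KF n R) P B n (fun x => x.1.1) ∧
        @IsRegularIC (KF n R) P ∧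
        (∀ g : G, ∀ x y : KF n R,
          KGle n R x y ↔ KGle n R (rmulKF n R g x) (rmulKF n R g y)) ∧
        (∀ Φ Ψ : Set (KF n R),
          @IsFlagOf (KF n R) P Set.univ Φ → @IsFlagOf (KF n R) P Set.univ Ψ →
          ∃ g : G, rmulKF n R g '' Φ = Ψ) :=
  kf_is_regular_incidence_complex' n R hC
end

section
/- Let Γ = ⟨R_{-1}, R_0, ..., R_n⟩ be a generalized string C-group. Then for i ≤ k ≤ l ≤ j (all in {-1,...,n}): Γ_{k+1}^+ Γ_{l-1}^- ∩ Γ_{\{i+1,...,j-1\}} = Γ_{\{k+1,...,j-1\}} Γ_{\{i+1,...,l-1\}}, where products denote product sets and Γ_I := ⟨R_m : m ∈ I⟩ (with Γ_∅ := R_{-1}). -/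
open Set Pointwise

lemma GamI_mono {G : Type*} [Group G] (R : ℤ → Subgroup G) {I J : Set ℤ}
    (h : I ⊆ J) : GamI R I ≤ GamI R J :=
  sup_le_sup_left (biSup_mono h) _

/-- in a generalized string C-group, for `i ≤ k ≤ l ≤ j`,
`Γ_{k+1}^+ Γ_{l-1}^- ∩ Γ_{{i+1,…,j-1}} = Γ_{{k+1,…,j-1}} Γ_{{i+1,…,l-1}}`. -/
theorem product_intersection_identity {G : Type*} [Group G]
    (n : ℤ) (R : ℤ → Subgroup G) (hC : GenStringC n R)
    (i k l j : ℤ) (hi : -1 ≤ i) (hik : i ≤ k) (hkl : k ≤ l) (hlj : l ≤ j)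
    (hj : j ≤ n) :
    ((↑(Gplus R n (k + 1)) : Set G) * ↑(Gminus R (l - 1))) ∩
        ↑(GamI R (Set.Icc (i + 1) (j - 1))) =
      (↑(GamI R (Set.Icc (k + 1) (j - 1))) : Set G) *
        ↑(GamI R (Set.Icc (i + 1) (l - 1))) := by
  have h1 : Set.Icc (k + 1) n ⊆ Set.Icc (-1 : ℤ) n :=
    Set.Icc_subset_Icc (by omega) le_rfl
  have h2 : Set.Icc (-1 : ℤ) (j - 1) ⊆ Set.Icc (-1 : ℤ) n :=
    Set.Icc_subset_Icc le_rfl (by omega)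
  have h3 : Set.Icc (-1 : ℤ) (l - 1) ⊆ Set.Icc (-1 : ℤ) n :=
    Set.Icc_subset_Icc le_rfl (by omega)
  have h4 : Set.Icc (i + 1) n ⊆ Set.Icc (-1 : ℤ) n :=
    Set.Icc_subset_Icc (by omega) le_rfl
  have e1 : Set.Icc (k + 1) n ∩ Set.Icc (-1 : ℤ) (j - 1) =
      Set.Icc (k + 1) (j - 1) := by
    ext x
    simp only [Set.mem_inter_iff, Set.mem_Icc]
    omega
  have e2 : Set.Icc (-1 : ℤ) (l - 1) ∩ Set.Icc (i + 1) n =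
      Set.Icc (i + 1) (l - 1) := by
    ext x
    simp only [Set.mem_inter_iff, Set.mem_Icc]
    omega
  ext g
  constructor
  · rintro ⟨⟨a, ha, b, hb, rfl⟩, hg⟩
    have hg' : a * b ∈ GamI R (Set.Icc (i + 1) (j - 1)) := hg
    have ha' : a ∈ GamI R (Set.Icc (k + 1) (j - 1)) := by
      rw [← e1, ← hC.inter _ _ h1 h2]
      refine ⟨ha, ?_⟩
      have : a = (a * b) * b⁻¹ := by group
      rw [this]
      exact mul_mem
        (GamI_mono R (Set.Icc_subset_Icc (by omega) le_rfl) hg')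
        (Subgroup.inv_mem _ (GamI_mono R (Set.Icc_subset_Icc le_rfl (by omega)) hb))
    have hb' : b ∈ GamI R (Set.Icc (i + 1) (l - 1)) := by
      rw [← e2, ← hC.inter _ _ h3 h4]
      refine ⟨hb, ?_⟩
      have : b = a⁻¹ * (a * b) := by group
      rw [this]
      exact mul_mem
        (Subgroup.inv_mem _ (GamI_mono R (Set.Icc_subset_Icc (by omega) le_rfl) ha))
        (GamI_mono R (Set.Icc_subset_Icc le_rfl (by omega)) hg')
    exact ⟨a, ha', b, hb', rfl⟩
  · rintro ⟨a, ha, b, hb, rfl⟩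
    refine ⟨⟨a, ?_, b, ?_, rfl⟩, ?_⟩
    · exact GamI_mono R (Set.Icc_subset_Icc le_rfl (by omega)) ha
    · exact GamI_mono R (Set.Icc_subset_Icc (by omega) le_rfl) hb
    · exact mul_mem
        (GamI_mono R (Set.Icc_subset_Icc (by omega) le_rfl) ha)
        (GamI_mono R (Set.Icc_subset_Icc le_rfl (by omega)) hb)
end

section
/- Let Γ = ⟨ρ_0, ..., ρ_{n-1}⟩ be a string C-group of rank n ≥ 1. Then the regular n-complex K(Γ) is an abstract polytope: for every pair of incident faces of ranks i-1 and i+1 there are exactly two i-faces between them. -/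
open Set Pointwise

/-- The distinguished generating subgroups associated with the involutory
generators of a string C-group: `R_i = ⟨ρ_i⟩` for `0 ≤ i ≤ n-1` and
`R_{-1} = R_n = {1}`. -/
def RofRho {G : Type*} [Group G] (n : ℤ) (ρ : ℤ → G) : ℤ → Subgroup G :=
  fun i => if 0 ≤ i ∧ i ≤ n - 1 then Subgroup.closure {ρ i} else ⊥

section Helpers

variable {G : Type*} [Group G]

lemma SC.comm_of_inv {u v : G} (hu : u*u=1) (hv : v*v=1) (huv : (u*v)*(u*v)=1) :
    Commute u v := by
  have h1 : (u*v)⁻¹ = u*v := inv_eq_of_mul_eq_one_right huv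
  have h2 : u⁻¹ = u := inv_eq_of_mul_eq_one_right hu
  have h3 : v⁻¹ = v := inv_eq_of_mul_eq_one_right hv
  have h4 : v * u = (u*v)⁻¹ := by rw [mul_inv_rev, h2, h3]
  rw [h1] at h4
  exact h4.symm

lemma SC.closure_commute {s t : Set G} (h : ∀ a ∈ s, ∀ b ∈ t, Commute a b) :
    ∀ x ∈ Subgroup.closure s, ∀ y ∈ Subgroup.closure t, Commute x y := by
  intro x hx
  induction hx using Subgroup.closure_induction with
  | mem a ha =>
    intro y hy
    induction hy using Subgroup.closure_induction with
    | mem b hb => exact h a ha b hb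
    | one => exact Commute.one_right a
    | mul c d _ _ hc hd => exact hc.mul_right hd
    | inv c _ hc => exact hc.inv_right
  | one => intro y hy; exact Commute.one_left y
  | mul c d _ _ hc hd => intro y hy; exact (hc y hy).mul_left (hd y hy)
  | inv c _ hc => intro y hy; exact (hc y hy).inv_left

lemma SC.mem_closure_singleton_invol {r : G} (hr : r * r = 1) {x : G}
    (hx : x ∈ Subgroup.closure {r}) : x = 1 ∨ x = r := by
  induction hx using Subgroup.closure_induction with
  | mem a ha => exact Or.inr ha
  | one => exact Or.inl rfl
  | mul c d _ _ hc hd =>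
    rcases hc with rfl | rfl <;> rcases hd with rfl | rfl <;>
      simp only [one_mul, mul_one, hr] <;> tauto
  | inv c _ hc =>
    rcases hc with rfl | rfl
    · simp
    · right; exact inv_eq_of_mul_eq_one_right hr

lemma SC.coe_sup {A B : Subgroup G} (h : ∀ a ∈ A, ∀ b ∈ B, Commute a b) :
    (↑(A ⊔ B) : Set G) = ↑A * ↑B := by
  have hP : ∃ P : Subgroup G, (↑P : Set G) = ↑A * ↑B := by
    refine ⟨⟨⟨⟨↑A * ↑B, ?_⟩, ?_⟩, ?_⟩, rfl⟩
    · intro x y hx hy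
      obtain ⟨a1, ha1, b1, hb1, rfl⟩ := hx
      obtain ⟨a2, ha2, b2, hb2, rfl⟩ := hy
      refine ⟨a1 * a2, A.mul_mem ha1 ha2, b1 * b2, B.mul_mem hb1 hb2, ?_⟩
      have hc := h a2 ha2 b1 hb1
      calc a1 * a2 * (b1 * b2) = a1 * (a2 * b1) * b2 := by group
        _ = a1 * (b1 * a2) * b2 := by rw [hc]
        _ = a1 * b1 * (a2 * b2) := by group
    · exact ⟨1, A.one_mem, 1, B.one_mem, mul_one 1⟩
    · intro x hx
      obtain ⟨a, ha, b, hb, rfl⟩ := hx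
      refine ⟨a⁻¹, A.inv_mem ha, b⁻¹, B.inv_mem hb, ?_⟩
      rw [mul_inv_rev]
      exact ((h a ha b hb).inv_inv).eq
  obtain ⟨P, hPeq⟩ := hP
  have h1 : A ⊔ B ≤ P := by
    apply sup_le
    · intro a ha; show a ∈ (↑P : Set G); rw [hPeq]; exact ⟨a, ha, 1, B.one_mem, mul_one a⟩
    · intro b hb; show b ∈ (↑P : Set G); rw [hPeq]; exact ⟨1, A.one_mem, b, hb, one_mul b⟩
  have h2 : (↑P : Set G) ⊆ ↑(A ⊔ B) := by
    rw [hPeq]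
    rintro x ⟨a, ha, b, hb, rfl⟩
    exact mul_mem (le_sup_left (a := A) (b := B) ha) (le_sup_right (a := A) (b := B) hb)
  apply subset_antisymm
  · intro x hx; rw [← hPeq]; exact h1 hx
  · intro x hx; exact h2 (by rw [hPeq]; exact hx)

/-- The subgroup generated by the `ρ i`, `i ∈ S` (within the relevant range). -/
def SCC (n : ℤ) (ρ : ℤ → G) (S : Set ℤ) : Subgroup G :=
  Subgroup.closure (ρ '' (S ∩ Set.Icc 0 (n-1)))

lemma SCC_GamI (n : ℤ) (ρ : ℤ → G) (I : Set ℤ) :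
    GamI (RofRho n ρ) I = SCC n ρ I := by
  have hbot : RofRho n ρ (-1) = ⊥ := if_neg (by omega)
  rw [GamI, hbot, bot_sup_eq]
  apply le_antisymm
  · apply iSup₂_le
    intro i hi
    by_cases hiK : 0 ≤ i ∧ i ≤ n - 1
    · rw [RofRho, if_pos hiK]
      apply Subgroup.closure_mono
      rintro x rfl
      exact ⟨i, ⟨hi, hiK.1, hiK.2⟩, rfl⟩
    · rw [RofRho, if_neg hiK]; exact bot_le
  · rw [SCC]
    apply Subgroup.closure_le _ |>.2
    rintro x ⟨i, ⟨hiI, hiK⟩, rfl⟩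
    have h1 : ρ i ∈ RofRho n ρ i := by
      rw [RofRho, if_pos ⟨hiK.1, hiK.2⟩]
      exact Subgroup.subset_closure rfl
    exact le_iSup₂ (f := fun i (_ : i ∈ I) => RofRho n ρ i) i hiI h1

lemma SCC_le (n : ℤ) (ρ : ℤ → G) {S T : Set ℤ}
    (h : S ∩ Set.Icc 0 (n-1) ⊆ T ∩ Set.Icc 0 (n-1)) : SCC n ρ S ≤ SCC n ρ T :=
  Subgroup.closure_mono (Set.image_mono h)

lemma SCC_congr (n : ℤ) (ρ : ℤ → G) {S T : Set ℤ}
    (h : S ∩ Set.Icc 0 (n-1) = T ∩ Set.Icc 0 (n-1)) : SCC n ρ S = SCC n ρ T := by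
  rw [SCC, SCC, h]

lemma SCC_union (n : ℤ) (ρ : ℤ → G) (S T : Set ℤ) :
    SCC n ρ (S ∪ T) = SCC n ρ S ⊔ SCC n ρ T := by
  rw [SCC, SCC, SCC, Set.union_inter_distrib_right, Set.image_union,
    Subgroup.closure_union]

lemma SCC_inter (n : ℤ) (ρ : ℤ → G)
    (hint : ∀ I J : Set ℤ, I ⊆ Set.Icc (0 : ℤ) (n - 1) →
      J ⊆ Set.Icc (0 : ℤ) (n - 1) →
      Subgroup.closure (ρ '' I) ⊓ Subgroup.closure (ρ '' J) =
        Subgroup.closure (ρ '' (I ∩ J)))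
    (S T : Set ℤ) : SCC n ρ S ⊓ SCC n ρ T = SCC n ρ (S ∩ T) := by
  have hs : (S ∩ Set.Icc 0 (n-1)) ∩ (T ∩ Set.Icc 0 (n-1)) =
      (S ∩ T) ∩ Set.Icc 0 (n-1) := by
    ext a; simp only [Set.mem_inter_iff]; tauto
  rw [SCC, SCC, SCC, hint _ _ Set.inter_subset_right Set.inter_subset_right, hs]

lemma SCC_empty (n : ℤ) (ρ : ℤ → G) : SCC n ρ ∅ = ⊥ := by
  rw [SCC, Set.empty_inter, Set.image_empty, Subgroup.closure_empty]

lemma SCC_commute (n : ℤ) (ρ : ℤ → G)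
    (hinv : ∀ i ∈ Set.Icc (0 : ℤ) (n - 1), ρ i * ρ i = 1 ∧ ρ i ≠ 1)
    (hcomm : ∀ i j : ℤ, 0 ≤ i → i < j - 1 → j ≤ n - 1 → (ρ i * ρ j) ^ 2 = 1)
    {S T : Set ℤ} (h : ∀ a ∈ S, ∀ b ∈ T, a < b - 1) :
    ∀ x ∈ SCC n ρ S, ∀ y ∈ SCC n ρ T, Commute x y := by
  apply SC.closure_commute
  rintro x ⟨a, ⟨haS, haK⟩, rfl⟩ y ⟨b, ⟨hbT, hbK⟩, rfl⟩
  rw [Set.mem_Icc] at haK hbK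
  have hab := h a haS b hbT
  apply SC.comm_of_inv (hinv a (Set.mem_Icc.2 haK)).1 (hinv b (Set.mem_Icc.2 hbK)).1
  have := hcomm a b haK.1 hab hbK.2
  rwa [pow_two] at this

/-- Decomposition `Γ_t = Γ_{t-1}^- Γ_{t+1}^+` (as product sets). -/
lemma SCC_dec (n : ℤ) (ρ : ℤ → G)
    (hinv : ∀ i ∈ Set.Icc (0 : ℤ) (n - 1), ρ i * ρ i = 1 ∧ ρ i ≠ 1)
    (hcomm : ∀ i j : ℤ, 0 ≤ i → i < j - 1 → j ≤ n - 1 → (ρ i * ρ j) ^ 2 = 1)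
    (t : ℤ) :
    (↑(Gsub (RofRho n ρ) n t) : Set G) =
      ↑(Gminus (RofRho n ρ) (t-1)) * ↑(Gplus (RofRho n ρ) n (t+1)) := by
  rw [Gsub, Gminus, Gplus, SCC_GamI, SCC_GamI, SCC_GamI]
  have h1 : SCC n ρ (Set.Icc (-1) n \ {t}) =
      SCC n ρ (Set.Icc (-1) (t-1) ∪ Set.Icc (t+1) n) :=
    SCC_congr n ρ (by
      ext a
      simp only [Set.mem_inter_iff, Set.mem_diff, Set.mem_Icc,
        Set.mem_singleton_iff, Set.mem_union]
      omega)
  rw [h1, SCC_union]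
  exact SC.coe_sup (SCC_commute n ρ hinv hcomm (fun a ha b hb => by
    rw [Set.mem_Icc] at ha hb; omega))

end Helpers

/-- for a string C-group `Γ = ⟨ρ_0,…,ρ_{n-1}⟩`, the regular
`n`-complex `K(Γ)` is an abstract polytope: between incident faces of ranks
`i-1` and `i+1` there are exactly two `i`-faces. -/
theorem string_cgroup_gives_polytope {G : Type*} [Group G]
    (n : ℤ) (hn : 1 ≤ n) (ρ : ℤ → G)
    (hinv : ∀ i ∈ Set.Icc (0 : ℤ) (n - 1), ρ i * ρ i = 1 ∧ ρ i ≠ 1)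
    (hcomm : ∀ i j : ℤ, 0 ≤ i → i < j - 1 → j ≤ n - 1 → (ρ i * ρ j) ^ 2 = 1)
    (hint : ∀ I J : Set ℤ, I ⊆ Set.Icc (0 : ℤ) (n - 1) →
      J ⊆ Set.Icc (0 : ℤ) (n - 1) →
      Subgroup.closure (ρ '' I) ⊓ Subgroup.closure (ρ '' J) =
        Subgroup.closure (ρ '' (I ∩ J)))
    (hgen : Subgroup.closure (ρ '' Set.Icc (0 : ℤ) (n - 1)) = ⊤) :
    ∀ x y : KF n (RofRho n ρ), KGle n (RofRho n ρ) x y →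
      y.1.1 = x.1.1 + 2 →
      {z : KF n (RofRho n ρ) | z.1.1 = x.1.1 + 1 ∧
        KGle n (RofRho n ρ) x z ∧ KGle n (RofRho n ρ) z y}.ncard = 2 := by
  intro x y hxy hy2
  obtain ⟨⟨i, hiI⟩, fx⟩ := x
  obtain ⟨⟨j, hjI⟩, fy⟩ := y
  have hj : j = i + 2 := hy2
  subst hj
  have hiB := Set.mem_Icc.1 hiI
  have hjB := Set.mem_Icc.1 hjI
  have hmK : (i+1) ∈ Set.Icc (0:ℤ) (n-1) := Set.mem_Icc.2 ⟨by omega, by omega⟩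
  have hmI : (i+1) ∈ Set.Icc (-1:ℤ) n := Set.mem_Icc.2 ⟨by omega, by omega⟩
  -- conversions to SCC
  have EGsub : ∀ t : ℤ, Gsub (RofRho n ρ) n t = SCC n ρ (Set.Icc (-1) n \ {t}) :=
    fun t => by rw [Gsub, SCC_GamI]
  have EGm : ∀ k : ℤ, Gminus (RofRho n ρ) k = SCC n ρ (Set.Icc (-1) k) :=
    fun k => by rw [Gminus, SCC_GamI]
  have EGp : ∀ k : ℤ, Gplus (RofRho n ρ) n k = SCC n ρ (Set.Icc k n) :=
    fun k => by rw [Gplus, SCC_GamI]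
  -- quotient helper
  have QE : ∀ (t : ℤ) (a b : G),
      Quotient.mk (QuotientGroup.rightRel (Gsub (RofRho n ρ) n t)) a =
      Quotient.mk (QuotientGroup.rightRel (Gsub (RofRho n ρ) n t)) b ↔
      b * a⁻¹ ∈ Gsub (RofRho n ρ) n t := by
    intro t a b
    constructor
    · intro h; exact QuotientGroup.rightRel_apply.1 (Quotient.exact h)
    · intro h; exact Quotient.sound (QuotientGroup.rightRel_apply.2 h)
  -- inclusion facts
  have L1 : Gplus (RofRho n ρ) n (i+1) ≤ Gsub (RofRho n ρ) n i := by
    rw [EGp, EGsub]; refine SCC_le n ρ ?_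
    intro a ha
    simp only [Set.mem_inter_iff, Set.mem_Icc, Set.mem_diff, Set.mem_singleton_iff] at ha ⊢
    omega
  have L2 : Gminus (RofRho n ρ) (i+1) ≤ Gsub (RofRho n ρ) n (i+2) := by
    rw [EGm, EGsub]; refine SCC_le n ρ ?_
    intro a ha
    simp only [Set.mem_inter_iff, Set.mem_Icc, Set.mem_diff, Set.mem_singleton_iff] at ha ⊢
    omega
  have L3 : Gminus (RofRho n ρ) i ≤ Gsub (RofRho n ρ) n (i+1) := by
    rw [EGm, EGsub]; refine SCC_le n ρ ?_
    intro a ha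
    simp only [Set.mem_inter_iff, Set.mem_Icc, Set.mem_diff, Set.mem_singleton_iff] at ha ⊢
    omega
  have L4 : Gplus (RofRho n ρ) n (i+3) ≤ Gplus (RofRho n ρ) n (i+2) := by
    rw [EGp, EGp]; refine SCC_le n ρ ?_
    intro a ha
    simp only [Set.mem_inter_iff, Set.mem_Icc] at ha ⊢
    omega
  have L5 : Gplus (RofRho n ρ) n (i+2) ≤ Gplus (RofRho n ρ) n (i+1) := by
    rw [EGp, EGp]; refine SCC_le n ρ ?_
    intro a ha
    simp only [Set.mem_inter_iff, Set.mem_Icc] at ha ⊢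
    omega
  have L6 : Gplus (RofRho n ρ) n (i+2) ≤ Gsub (RofRho n ρ) n (i+1) := by
    rw [EGp, EGsub]; refine SCC_le n ρ ?_
    intro a ha
    simp only [Set.mem_inter_iff, Set.mem_Icc, Set.mem_diff, Set.mem_singleton_iff] at ha ⊢
    omega
  have L7 : Gminus (RofRho n ρ) (i-1) ≤ Gminus (RofRho n ρ) i := by
    rw [EGm, EGm]; refine SCC_le n ρ ?_
    intro a ha
    simp only [Set.mem_inter_iff, Set.mem_Icc] at ha ⊢
    omega
  have L8 : Gminus (RofRho n ρ) i ≤ Gminus (RofRho n ρ) (i+1) := by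
    rw [EGm, EGm]; refine SCC_le n ρ ?_
    intro a ha
    simp only [Set.mem_inter_iff, Set.mem_Icc] at ha ⊢
    omega
  have L9 : Gminus (RofRho n ρ) (i-1) ≤ Gsub (RofRho n ρ) n (i+1) := by
    rw [EGm, EGsub]; refine SCC_le n ρ ?_
    intro a ha
    simp only [Set.mem_inter_iff, Set.mem_Icc, Set.mem_diff, Set.mem_singleton_iff] at ha ⊢
    omega
  -- commuting facts
  have CM2 : ∀ a ∈ Gminus (RofRho n ρ) (i+1), ∀ b ∈ Gplus (RofRho n ρ) n (i+3),
      Commute a b := by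
    rw [EGm, EGp]
    exact SCC_commute n ρ hinv hcomm (fun a ha b hb => by
      rw [Set.mem_Icc] at ha hb; omega)
  have CM3 : ∀ a ∈ Gminus (RofRho n ρ) i, ∀ b ∈ Gplus (RofRho n ρ) n (i+2),
      Commute a b := by
    rw [EGm, EGp]
    exact SCC_commute n ρ hinv hcomm (fun a ha b hb => by
      rw [Set.mem_Icc] at ha hb; omega)
  -- intersection at the middle rank
  have INT : Gminus (RofRho n ρ) (i+1) ⊓ Gplus (RofRho n ρ) n (i+1) =
      SCC n ρ {i+1} := by
    rw [EGm, EGp, SCC_inter n ρ hint]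
    refine SCC_congr n ρ ?_
    ext a
    simp only [Set.mem_inter_iff, Set.mem_Icc, Set.mem_singleton_iff]
    omega
  have RS : ∀ d ∈ SCC n ρ ({i+1} : Set ℤ), d = 1 ∨ d = ρ (i+1) := by
    intro d hd
    have hSm : SCC n ρ ({i+1} : Set ℤ) = Subgroup.closure {ρ (i+1)} := by
      rw [SCC, Set.inter_eq_self_of_subset_left (Set.singleton_subset_iff.2 hmK),
        Set.image_singleton]
    rw [hSm] at hd
    exact SC.mem_closure_singleton_invol (hinv _ hmK).1 hd
  have hρm : ρ (i+1) ∈ Gminus (RofRho n ρ) (i+1) := by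
    rw [EGm]
    exact Subgroup.subset_closure ⟨i+1, ⟨Set.mem_Icc.2 ⟨by omega, le_refl _⟩, hmK⟩, rfl⟩
  have hρp : ρ (i+1) ∈ Gplus (RofRho n ρ) n (i+1) := by
    rw [EGp]
    exact Subgroup.subset_closure ⟨i+1, ⟨Set.mem_Icc.2 ⟨le_refl _, by omega⟩, hmK⟩, rfl⟩
  have hρnot : ρ (i+1) ∉ Gsub (RofRho n ρ) n (i+1) := by
    intro hmem
    have h2 : ρ (i+1) ∈ SCC n ρ ({i+1} : Set ℤ) :=
      Subgroup.subset_closure ⟨i+1, ⟨rfl, hmK⟩, rfl⟩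
    have h3 : ρ (i+1) ∈ SCC n ρ ({i+1} : Set ℤ) ⊓
        SCC n ρ (Set.Icc (-1) n \ {i+1}) := ⟨h2, by rwa [EGsub] at hmem⟩
    rw [SCC_inter n ρ hint] at h3
    have h4 : ({i+1} : Set ℤ) ∩ (Set.Icc (-1) n \ {i+1}) = (∅ : Set ℤ) := by
      ext a
      constructor
      · rintro ⟨h5, -, h6⟩; exact (h6 h5).elim
      · exact fun h => h.elim
    rw [h4, SCC_empty] at h3
    exact (hinv _ hmK).2 (Subgroup.mem_bot.1 h3)
  have hρinv : (ρ (i+1))⁻¹ = ρ (i+1) := inv_eq_of_mul_eq_one_right (hinv _ hmK).1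
  -- normalize the incidence hypothesis and produce a common representative g
  obtain ⟨-, φ, ψ, hfx0, hfy0, hmem⟩ := hxy
  have hfx : fx = Quotient.mk (QuotientGroup.rightRel (Gsub (RofRho n ρ) n i)) φ := hfx0
  have hfy : fy = Quotient.mk (QuotientGroup.rightRel (Gsub (RofRho n ρ) n (i+2))) ψ := hfy0
  have hmem' : φ * ψ⁻¹ ∈ (↑(Gplus (RofRho n ρ) n (i+1)) : Set G) *
      ↑(Gminus (RofRho n ρ) (i+2-1)) := hmem
  rw [show (i+2-1 : ℤ) = i+1 from by ring] at hmem'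
  obtain ⟨a, ha, b, hb, hab0⟩ := hmem'
  have hab : a * b = φ * ψ⁻¹ := hab0
  set g := a⁻¹ * φ with hgdef
  have hgφ : g * φ⁻¹ = a⁻¹ := by rw [hgdef]; group
  have hgψ : g * ψ⁻¹ = b := by
    calc g * ψ⁻¹ = a⁻¹ * (φ * ψ⁻¹) := by rw [hgdef]; group
      _ = a⁻¹ * (a * b) := by rw [← hab]
      _ = b := by group
  have hfx' : fx = Quotient.mk (QuotientGroup.rightRel (Gsub (RofRho n ρ) n i)) g := by
    rw [hfx]
    exact (QE i φ g).2 (by rw [hgφ]; exact inv_mem (L1 ha))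
  have hfy' : fy = Quotient.mk (QuotientGroup.rightRel (Gsub (RofRho n ρ) n (i+2))) g := by
    rw [hfy]
    exact (QE (i+2) ψ g).2 (by rw [hgψ]; exact L2 hb)
  -- the two middle faces
  set z1 : KF n (RofRho n ρ) :=
    ⟨⟨i+1, hmI⟩, Quotient.mk (QuotientGroup.rightRel (Gsub (RofRho n ρ) n (i+1))) g⟩
    with hz1def
  set z2 : KF n (RofRho n ρ) :=
    ⟨⟨i+1, hmI⟩, Quotient.mk (QuotientGroup.rightRel (Gsub (RofRho n ρ) n (i+1)))
      (ρ (i+1) * g)⟩ with hz2def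
  have hne : z1 ≠ z2 := by
    intro h
    rw [hz1def, hz2def] at h
    have h2 : (Quotient.mk (QuotientGroup.rightRel (Gsub (RofRho n ρ) n (i+1))) g) =
        Quotient.mk (QuotientGroup.rightRel (Gsub (RofRho n ρ) n (i+1))) (ρ (i+1) * g) := by
      exact eq_of_heq (Sigma.ext_iff.1 h).2
    have h3 := (QE (i+1) g (ρ (i+1) * g)).1 h2
    rw [mul_inv_cancel_right] at h3
    exact hρnot h3
  have hsetpair : {z : KF n (RofRho n ρ) |
      z.1.1 = (⟨⟨i, hiI⟩, fx⟩ : KF n (RofRho n ρ)).1.1 + 1 ∧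
      KGle n (RofRho n ρ) ⟨⟨i, hiI⟩, fx⟩ z ∧
      KGle n (RofRho n ρ) z ⟨⟨i+2, hjI⟩, fy⟩} = {z1, z2} := by
    ext z
    simp only [Set.mem_setOf_eq, Set.mem_insert_iff, Set.mem_singleton_iff]
    constructor
    · rintro ⟨hzr, hxz, hzy⟩
      obtain ⟨⟨r, hrI⟩, f⟩ := z
      have hr : r = i + 1 := hzr
      subst hr
      -- unpack KGle x z
      obtain ⟨-, φ', ζ', hφ', hζ', hmem1⟩ := hxz
      have hmem1' : φ' * ζ'⁻¹ ∈ (↑(Gplus (RofRho n ρ) n (i+1)) : Set G) *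
          ↑(Gminus (RofRho n ρ) (i+1-1)) := hmem1
      rw [show (i+1-1 : ℤ) = i from by ring] at hmem1'
      obtain ⟨a', ha', b', hb', hab0'⟩ := hmem1'
      have hab' : a' * b' = φ' * ζ'⁻¹ := hab0'
      have hφ'2 : fx = Quotient.mk (QuotientGroup.rightRel (Gsub (RofRho n ρ) n i)) φ' := hφ'
      have hζ'2 : f = Quotient.mk (QuotientGroup.rightRel (Gsub (RofRho n ρ) n (i+1))) ζ' := hζ'
      have hs : g * φ'⁻¹ ∈ Gsub (RofRho n ρ) n i :=
        (QE i φ' g).1 (by rw [← hφ'2, hfx'])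
      set p : G := (g * φ'⁻¹) * a' with hpdef
      have hp : p ∈ Gsub (RofRho n ρ) n i := mul_mem hs (L1 ha')
      have key1 : g * ζ'⁻¹ = p * b' := by
        calc g * ζ'⁻¹ = (g * φ'⁻¹) * (φ' * ζ'⁻¹) := by group
          _ = (g * φ'⁻¹) * (a' * b') := by rw [hab']
          _ = p * b' := by rw [hpdef]; group
      -- unpack KGle z y
      obtain ⟨-, ζ'', ψ', hζ'', hψ', hmem2⟩ := hzy
      have hmem2' : ζ'' * ψ'⁻¹ ∈ (↑(Gplus (RofRho n ρ) n (i+1+1)) : Set G) *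
          ↑(Gminus (RofRho n ρ) (i+2-1)) := hmem2
      rw [show (i+1+1 : ℤ) = i+2 from by ring, show (i+2-1 : ℤ) = i+1 from by ring] at hmem2'
      obtain ⟨e, he, c0, hc0, hec0⟩ := hmem2'
      have hec : e * c0 = ζ'' * ψ'⁻¹ := hec0
      have hζ''2 : f = Quotient.mk (QuotientGroup.rightRel (Gsub (RofRho n ρ) n (i+1))) ζ'' := hζ''
      have hψ'2 : fy = Quotient.mk (QuotientGroup.rightRel (Gsub (RofRho n ρ) n (i+2))) ψ' := hψ'
      have ht : g * ψ'⁻¹ ∈ Gsub (RofRho n ρ) n (i+2) :=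
        (QE (i+2) ψ' g).1 (by rw [← hψ'2, hfy'])
      have htinv : (g * ψ'⁻¹)⁻¹ ∈ (↑(Gminus (RofRho n ρ) (i+2-1)) : Set G) *
          ↑(Gplus (RofRho n ρ) n (i+2+1)) := by
        rw [← SCC_dec n ρ hinv hcomm (i+2)]
        exact inv_mem ht
      rw [show (i+2-1 : ℤ) = i+1 from by ring, show (i+2+1 : ℤ) = i+3 from by ring] at htinv
      obtain ⟨c1, hc1, e1, he1, hce0⟩ := htinv
      have hce : c1 * e1 = (g * ψ'⁻¹)⁻¹ := hce0
      have hcomm1 : Commute (c0 * c1) e1 := CM2 _ (mul_mem hc0 hc1) _ he1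
      have hkey2 : ζ'' * g⁻¹ = (e * e1) * (c0 * c1) := by
        calc ζ'' * g⁻¹ = (ζ'' * ψ'⁻¹) * (g * ψ'⁻¹)⁻¹ := by group
          _ = (e * c0) * (c1 * e1) := by rw [← hec, ← hce]
          _ = e * ((c0 * c1) * e1) := by group
          _ = e * (e1 * (c0 * c1)) := by rw [hcomm1.eq]
          _ = (e * e1) * (c0 * c1) := by group
      -- same coset for the two representatives of f
      have hr0 : ζ'' * ζ'⁻¹ ∈ Gsub (RofRho n ρ) n (i+1) :=
        (QE (i+1) ζ' ζ'').1 (by rw [← hζ'2, ← hζ''2])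
      have hup : p⁻¹ = b' * (ζ'' * ζ'⁻¹)⁻¹ * (e * e1) * (c0 * c1) := by
        have h10 : ζ'' * ζ'⁻¹ = ((e * e1) * (c0 * c1)) * (p * b') := by
          calc ζ'' * ζ'⁻¹ = (ζ'' * g⁻¹) * (g * ζ'⁻¹) := by group
            _ = ((e * e1) * (c0 * c1)) * (p * b') := by rw [hkey2, key1]
        rw [h10]; group
      -- decompose p⁻¹ ∈ Γ_i
      have hu : p⁻¹ ∈ (↑(Gminus (RofRho n ρ) (i-1)) : Set G) *
          ↑(Gplus (RofRho n ρ) n (i+1)) := by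
        rw [← SCC_dec n ρ hinv hcomm i]
        exact inv_mem hp
      obtain ⟨u1, hu1, u2, hu2, hu120⟩ := hu
      have hu12 : u1 * u2 = p⁻¹ := hu120
      -- decompose w ∈ Γ_{i+1}
      have hwmem : b' * (ζ'' * ζ'⁻¹)⁻¹ * (e * e1) ∈ Gsub (RofRho n ρ) n (i+1) :=
        mul_mem (mul_mem (L3 hb') (inv_mem hr0)) (L6 (mul_mem he (L4 he1)))
      have hw : b' * (ζ'' * ζ'⁻¹)⁻¹ * (e * e1) ∈
          (↑(Gminus (RofRho n ρ) (i+1-1)) : Set G) *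
          ↑(Gplus (RofRho n ρ) n (i+1+1)) := by
        rw [← SCC_dec n ρ hinv hcomm (i+1)]
        exact hwmem
      rw [show (i+1-1 : ℤ) = i from by ring, show (i+1+1 : ℤ) = i+2 from by ring] at hw
      obtain ⟨w1, hw1, w2, hw2, hw120⟩ := hw
      have hw12 : w1 * w2 = b' * (ζ'' * ζ'⁻¹)⁻¹ * (e * e1) := hw120
      have heq1 : u1 * u2 = (w1 * w2) * (c0 * c1) := by
        rw [hu12, hup, hw12]
      -- the middle element d
      have hcommw : Commute (w1⁻¹ * u1) w2⁻¹ :=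
        (CM3 _ (mul_mem (inv_mem hw1) (L7 hu1)) _ hw2).inv_right
      have h6 : (w1⁻¹ * u1) * (w2⁻¹ * u2) = c0 * c1 := by
        calc (w1⁻¹ * u1) * (w2⁻¹ * u2) = ((w1⁻¹ * u1) * w2⁻¹) * u2 := by group
          _ = (w2⁻¹ * (w1⁻¹ * u1)) * u2 := by rw [hcommw.eq]
          _ = w2⁻¹ * (w1⁻¹ * (u1 * u2)) := by group
          _ = w2⁻¹ * (w1⁻¹ * ((w1 * w2) * (c0 * c1))) := by rw [heq1]
          _ = c0 * c1 := by group
      have hd_eq : w2⁻¹ * u2 = (w1⁻¹ * u1)⁻¹ * (c0 * c1) := by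
        rw [← h6]; group
      have hdm : w2⁻¹ * u2 ∈ Gminus (RofRho n ρ) (i+1) := by
        rw [hd_eq]
        exact mul_mem (inv_mem (mul_mem (inv_mem (L8 hw1)) (L8 (L7 hu1))))
          (mul_mem hc0 hc1)
      have hdp : w2⁻¹ * u2 ∈ Gplus (RofRho n ρ) n (i+1) :=
        mul_mem (inv_mem (L5 hw2)) hu2
      have hdin : w2⁻¹ * u2 ∈ SCC n ρ ({i+1} : Set ℤ) := by
        rw [← INT]; exact ⟨hdm, hdp⟩
      -- express ζ'
      have hζ'eq : ζ' = ((b'⁻¹ * u1) * w2) * ((w2⁻¹ * u2) * g) := by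
        have h7 : ζ' = (g * ζ'⁻¹)⁻¹ * g := by group
        rw [h7, key1]
        have h8 : (p * b')⁻¹ * g = b'⁻¹ * (p⁻¹ * g) := by group
        rw [h8, ← hu12]
        group
      have hfmk : f = Quotient.mk (QuotientGroup.rightRel (Gsub (RofRho n ρ) n (i+1)))
          ((w2⁻¹ * u2) * g) := by
        rw [hζ'2]
        refine (QE (i+1) ζ' ((w2⁻¹ * u2) * g)).2 ?_
        have h9 : ((w2⁻¹ * u2) * g) * ζ'⁻¹ = ((b'⁻¹ * u1) * w2)⁻¹ := by
          rw [hζ'eq]; group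
        rw [h9]
        exact inv_mem (mul_mem (mul_mem (inv_mem (L3 hb')) (L9 hu1)) (L6 hw2))
      rcases RS _ hdin with hd1 | hd1
      · left
        rw [hd1, one_mul] at hfmk
        rw [hz1def]
        exact congrArg (fun q => (⟨⟨i+1, hmI⟩, q⟩ : KF n (RofRho n ρ))) hfmk
      · right
        rw [hd1] at hfmk
        rw [hz2def]
        exact congrArg (fun q => (⟨⟨i+1, hmI⟩, q⟩ : KF n (RofRho n ρ))) hfmk
    · intro hz
      rcases hz with rfl | rfl
      · refine ⟨rfl, ⟨?_, g, g, hfx', rfl, ?_⟩, ⟨?_, g, g, rfl, hfy', ?_⟩⟩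
        · show (i : ℤ) ≤ i + 1; omega
        · show g * g⁻¹ ∈ (↑(Gplus (RofRho n ρ) n (i+1)) : Set G) *
            ↑(Gminus (RofRho n ρ) (i+1-1))
          refine ⟨1, (Gplus (RofRho n ρ) n (i+1)).one_mem, 1,
            (Gminus (RofRho n ρ) (i+1-1)).one_mem, ?_⟩
          show (1 : G) * 1 = g * g⁻¹
          group
        · show (i + 1 : ℤ) ≤ i + 2; omega
        · show g * g⁻¹ ∈ (↑(Gplus (RofRho n ρ) n (i+1+1)) : Set G) *
            ↑(Gminus (RofRho n ρ) (i+2-1))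
          refine ⟨1, (Gplus (RofRho n ρ) n (i+1+1)).one_mem, 1,
            (Gminus (RofRho n ρ) (i+2-1)).one_mem, ?_⟩
          show (1 : G) * 1 = g * g⁻¹
          group
      · refine ⟨rfl, ⟨?_, g, ρ (i+1) * g, hfx', rfl, ?_⟩,
          ⟨?_, ρ (i+1) * g, g, rfl, hfy', ?_⟩⟩
        · show (i : ℤ) ≤ i + 1; omega
        · show g * (ρ (i+1) * g)⁻¹ ∈ (↑(Gplus (RofRho n ρ) n (i+1)) : Set G) *
            ↑(Gminus (RofRho n ρ) (i+1-1))
          refine ⟨ρ (i+1), hρp, 1, (Gminus (RofRho n ρ) (i+1-1)).one_mem, ?_⟩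
          show ρ (i+1) * 1 = g * (ρ (i+1) * g)⁻¹
          have h11 : g * (ρ (i+1) * g)⁻¹ = (ρ (i+1))⁻¹ := by group
          rw [h11, hρinv, mul_one]
        · show (i + 1 : ℤ) ≤ i + 2; omega
        · show (ρ (i+1) * g) * g⁻¹ ∈ (↑(Gplus (RofRho n ρ) n (i+1+1)) : Set G) *
            ↑(Gminus (RofRho n ρ) (i+2-1))
          have hρm' : ρ (i+1) ∈ Gminus (RofRho n ρ) (i+2-1) := by
            rw [show (i+2-1 : ℤ) = i+1 from by ring]; exact hρm
          refine ⟨1, (Gplus (RofRho n ρ) n (i+1+1)).one_mem, ρ (i+1), hρm', ?_⟩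
          show (1 : G) * ρ (i+1) = (ρ (i+1) * g) * g⁻¹
          rw [mul_inv_cancel_right, one_mul]
  rw [hsetpair]
  exact Set.ncard_pair hne
end
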